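/- arXiv:2003.01815 — 10 statements merged into one kernel-verified Lean document; each statement's English description precedes it below -/
import Mathlib

section
/- Let n ≥ 1 and let S : ℝⁿ × ℝⁿ → ℝ be any bilinear form. If there is a constant B ∈ ℝ such that S(t, t) ≥ B for every vector t ∈ ℝⁿ with η(t, t) = −1, then S(k, k) ≥ 0 for every null vector k ∈ ℝⁿ. -/
open scoped BigOperators

/-- The Minkowski bilinear form on `ℝⁿ`: `η(x,y) = -x₀y₀ + ∑_{i≥1} xᵢyᵢ`. -/
def minkowski {n : ℕ} (x y : Fin n → ℝ) : ℝ :=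
  ∑ i : Fin n, (if (i : ℕ) = 0 then (-1 : ℝ) else 1) * x i * y i

private lemma mink_comm {n : ℕ} (x y : Fin n → ℝ) : minkowski x y = minkowski y x :=
  Finset.sum_congr rfl fun i _ => by ring

private lemma mink_bilin {n : ℕ} (x y : Fin n → ℝ) (a : ℝ) :
    minkowski (x + a • y) (x + a • y)
      = minkowski x x + a * minkowski x y + a * minkowski y x + a ^ 2 * minkowski y y := by
  simp only [minkowski, Finset.mul_sum, ← Finset.sum_add_distrib]
  refine Finset.sum_congr rfl fun i _ => ?_
  simp only [Pi.add_apply, Pi.smul_apply, smul_eq_mul]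
  ring

private lemma mink_smul_self {n : ℕ} (a : ℝ) (x : Fin n → ℝ) :
    minkowski (a • x) (a • x) = a ^ 2 * minkowski x x := by
  simp only [minkowski, Finset.mul_sum]
  refine Finset.sum_congr rfl fun i _ => ?_
  simp only [Pi.smul_apply, smul_eq_mul]
  ring

private lemma mink_single {n : ℕ} (hn : 1 ≤ n) (y : Fin n → ℝ) :
    minkowski (Pi.single (⟨0, hn⟩ : Fin n) (1 : ℝ)) y = -(y ⟨0, hn⟩) := by
  rw [minkowski, Finset.sum_eq_single (⟨0, hn⟩ : Fin n)]
  · simp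
  · intro i _ hi
    rw [Pi.single_apply, if_neg hi]
    ring
  · simp

private lemma aux_pos (n : ℕ) (hn : 1 ≤ n)
    (S : (Fin n → ℝ) →ₗ[ℝ] (Fin n → ℝ) →ₗ[ℝ] ℝ) (B : ℝ)
    (hB : ∀ t : Fin n → ℝ, minkowski t t = -1 → B ≤ S t t)
    (k : Fin n → ℝ) (hk : minkowski k k = 0) (hk0 : 0 < k ⟨0, hn⟩) :
    0 ≤ S k k := by
  set i0 : Fin n := ⟨0, hn⟩ with hi0
  set e : Fin n → ℝ := Pi.single i0 1 with he
  have hek : minkowski e k = -(k i0) := mink_single hn k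
  have hke : minkowski k e = -(k i0) := by rw [mink_comm]; exact hek
  have hee : minkowski e e = -1 := by
    have := mink_single hn e
    rwa [he, Pi.single_eq_same] at this
  have key : ∀ ε : ℝ, 0 < ε →
      ε * (B * (2 * k i0 + ε) - S k e - S e k - ε * S e e) ≤ S k k := by
    intro ε hε
    set d : ℝ := ε * (2 * k i0 + ε) with hd
    have hdpos : 0 < d := mul_pos hε (by nlinarith)
    set u : Fin n → ℝ := k + ε • e with hu
    have huu : minkowski u u = -d := by
      rw [hu, mink_bilin, hk, hke, hek, hee, hd]; ring
    have hsq : (Real.sqrt d) ^ 2 = d := Real.sq_sqrt hdpos.le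
    have hsqpos : 0 < Real.sqrt d := Real.sqrt_pos.mpr hdpos
    have htt : minkowski ((Real.sqrt d)⁻¹ • u) ((Real.sqrt d)⁻¹ • u) = -1 := by
      rw [mink_smul_self, huu]
      field_simp
      rw [hsq]
    have hBt := hB _ htt
    have hSt : (S ((Real.sqrt d)⁻¹ • u)) ((Real.sqrt d)⁻¹ • u)
        = d⁻¹ * S u u := by
      simp only [map_smul, LinearMap.smul_apply, smul_eq_mul]
      rw [← mul_assoc, ← mul_inv, Real.mul_self_sqrt hdpos.le]
    rw [hSt] at hBt
    have hBd : B * d ≤ S u u := by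
      rw [inv_mul_eq_div, le_div_iff₀ hdpos] at hBt
      linarith
    have hSuu : S u u = S k k + ε * S k e + ε * S e k + ε ^ 2 * S e e := by
      simp only [hu, map_add, map_smul, LinearMap.add_apply, LinearMap.smul_apply,
        smul_eq_mul]
      ring
    rw [hSuu, hd] at hBd
    nlinarith [hBd]
  have hcont : Filter.Tendsto
      (fun ε : ℝ => ε * (B * (2 * k i0 + ε) - S k e - S e k - ε * S e e))
      (nhdsWithin 0 (Set.Ioi 0)) (nhds 0) := by
    have hc : Continuous fun ε : ℝ =>
        ε * (B * (2 * k i0 + ε) - S k e - S e k - ε * S e e) := by fun_prop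
    have h0 := hc.tendsto 0
    simp only [zero_mul] at h0
    exact h0.mono_left nhdsWithin_le_nhds
  exact le_of_tendsto hcont
    (Filter.eventually_of_mem self_mem_nhdsWithin fun ε hε => key ε hε)

/-- If a bilinear form `S` on `ℝⁿ` is bounded below on the normalized timelike
vectors (`η(t,t) = -1`), then `S(k,k) ≥ 0` for every null vector `k`. -/
theorem tipler_normalized_timelike_bound_implies_nec
    (n : ℕ) (hn : 1 ≤ n)
    (S : (Fin n → ℝ) →ₗ[ℝ] (Fin n → ℝ) →ₗ[ℝ] ℝ) (B : ℝ)
    (hB : ∀ t : Fin n → ℝ, minkowski t t = -1 → B ≤ S t t) :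
    ∀ k : Fin n → ℝ, minkowski k k = 0 → 0 ≤ S k k := by
  intro k hk
  rcases lt_trichotomy (k ⟨0, hn⟩) 0 with h | h | h
  · have h2 : minkowski (-k) (-k) = 0 := by
      rw [← hk]; exact Finset.sum_congr rfl fun i _ => by simp only [Pi.neg_apply]; ring
    have h3 : 0 < (-k) ⟨0, hn⟩ := by simpa using h
    have := aux_pos n hn S B hB (-k) h2 h3
    simpa using this
  · -- k₀ = 0 forces k = 0
    have hk0 : k = 0 := by
      have hnn : ∀ i ∈ (Finset.univ : Finset (Fin n)),
          0 ≤ (if (i : ℕ) = 0 then (-1 : ℝ) else 1) * k i * k i := by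
        intro i _
        by_cases hi : (i : ℕ) = 0
        · have : i = ⟨0, hn⟩ := Fin.ext hi
          simp [this, h]
        · simp only [if_neg hi, one_mul]
          exact mul_self_nonneg _
      have hz := (Finset.sum_eq_zero_iff_of_nonneg hnn).mp hk
      funext i
      by_cases hi : (i : ℕ) = 0
      · have : i = ⟨0, hn⟩ := Fin.ext hi
        simp [this, h]
      · have := hz i (Finset.mem_univ i)
        simp only [if_neg hi, one_mul] at this
        have := mul_self_eq_zero.mp this
        simpa using this
    rw [hk0]
    simp
  · exact aux_pos n hn S B hB k hk h
end

section
/- Let n ≥ 1, let p ∈ ℝⁿ, let V ≥ 0 be a real number, and let t, ξ ∈ ℝⁿ be co-oriented timelike vectors for the Minkowski bilinear form (η(t,t) < 0, η(ξ,ξ) < 0, η(t,ξ) < 0). Then the contracted stress tensor of a scalar field, T(t,ξ) = η(p,t)·η(p,ξ) − (1/2)·η(t,ξ)·(η(p,p) + V), is nonnegative. In other words, a scalar field with nonnegative potential satisfies the dominant energy condition pointwise, off-shell. -/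
open scoped BigOperators

def msum {n : ℕ} (x y : Fin n → ℝ) : ℝ :=
  ∑ i : Fin n, (if (i : ℕ) = 0 then (0:ℝ) else x i * y i)

lemma minkowski_eq {n : ℕ} (hn : 1 ≤ n) (x y : Fin n → ℝ) :
    minkowski x y = msum x y - x ⟨0, hn⟩ * y ⟨0, hn⟩ := by
  unfold minkowski msum
  have h : ∀ i : Fin n, (if (i : ℕ) = 0 then (-1 : ℝ) else 1) * x i * y i
      = (if (i : ℕ) = 0 then (0:ℝ) else x i * y i)
        - (if i = (⟨0, hn⟩ : Fin n) then x i * y i else 0) := by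
    intro i
    have : ((i : ℕ) = 0) ↔ (i = (⟨0, hn⟩ : Fin n)) :=
      ⟨fun hi => Fin.ext hi, fun hi => by rw [hi]⟩
    by_cases hc : (i : ℕ) = 0
    · rw [if_pos hc, if_pos (this.mp hc), if_pos hc]; ring
    · rw [if_neg hc, if_neg hc, if_neg (fun hh => hc (this.mpr hh))]; ring
  rw [Finset.sum_congr rfl (fun i _ => h i), Finset.sum_sub_distrib,
    Finset.sum_ite_eq' Finset.univ]
  simp

lemma msum_nonneg {n : ℕ} (x : Fin n → ℝ) : 0 ≤ msum x x := by
  unfold msum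
  apply Finset.sum_nonneg
  intro i _
  split
  · exact le_refl _
  · exact mul_self_nonneg _

lemma msum_cs {n : ℕ} (x y : Fin n → ℝ) : (msum x y)^2 ≤ msum x x * msum y y := by
  have h := Finset.sum_mul_sq_le_sq_mul_sq Finset.univ
    (fun i : Fin n => if (i : ℕ) = 0 then (0:ℝ) else x i)
    (fun i : Fin n => if (i : ℕ) = 0 then (0:ℝ) else y i)
  have e1 : ∀ (a b : Fin n → ℝ),
      (∑ i : Fin n, (fun i : Fin n => if (i : ℕ) = 0 then (0:ℝ) else a i) i
        * (fun i : Fin n => if (i : ℕ) = 0 then (0:ℝ) else b i) i) = msum a b := by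
    intro a b
    unfold msum
    refine Finset.sum_congr rfl fun i _ => ?_
    by_cases hc : (i : ℕ) = 0 <;> simp [hc]
  have e2 : ∀ (a : Fin n → ℝ),
      (∑ i : Fin n, (fun i : Fin n => if (i : ℕ) = 0 then (0:ℝ) else a i) i ^ 2) = msum a a := by
    intro a
    unfold msum
    refine Finset.sum_congr rfl fun i _ => ?_
    by_cases hc : (i : ℕ) = 0 <;> simp [hc, sq]
  rw [e1, e2, e2] at h
  exact h

lemma msum_comm {n : ℕ} (x y : Fin n → ℝ) : msum x y = msum y x := by
  unfold msum
  refine Finset.sum_congr rfl fun i _ => ?_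
  by_cases hc : (i : ℕ) = 0 <;> simp [hc, mul_comm]

lemma msum_lin {n : ℕ} (α β : ℝ) (x y z : Fin n → ℝ) :
    msum (fun i => α * x i + β * y i) z = α * msum x z + β * msum y z := by
  unfold msum
  rw [Finset.mul_sum, Finset.mul_sum, ← Finset.sum_add_distrib]
  refine Finset.sum_congr rfl fun i _ => ?_
  by_cases hc : (i : ℕ) = 0 <;> simp [hc] <;> ring

/-- reverse Cauchy-Schwarz, scalar form -/
lemma rev_cs (a c TT PP PT : ℝ) (hTT0 : 0 ≤ TT) (hPP0 : 0 ≤ PP)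
    (hTTa : TT < a^2) (hcs : PT^2 ≤ PP * TT) :
    (PP - c^2) * (TT - a^2) ≤ (PT - c*a)^2 := by
  rcases eq_or_lt_of_le hTT0 with h0 | h0
  · have hPT : PT = 0 := by nlinarith [sq_nonneg PT]
    rw [hPT, ← h0]
    nlinarith [mul_nonneg hPP0 (sq_nonneg a), sq_nonneg (c*a)]
  · have key : 0 ≤ TT * ((PT - c*a)^2 - (PP - c^2)*(TT - a^2)) := by
      nlinarith [sq_nonneg (PT*a - c*TT),
        mul_nonneg (sub_nonneg.mpr hcs) (sub_nonneg.mpr hTTa.le)]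
    nlinarith
/-- scalar cone lemma -/
lemma cone_scalar (a b J0 TT XX TX jj ju jv : ℝ)
    (hTT0 : 0 ≤ TT) (hXX0 : 0 ≤ XX) (hjj0 : 0 ≤ jj)
    (hTT : TT < a^2) (hXX : XX < b^2) (hTX : TX < a*b)
    (hcsTX : TX^2 ≤ TT * XX) (hcsju : ju^2 ≤ jj * TT) (hcsjv : jv^2 ≤ jj * XX)
    (hjj : jj ≤ J0^2) (hju : J0 * a ≤ ju) :
    J0 * b ≤ jv := by
  have hab : 0 < a * b := by nlinarith [sq_nonneg (a*b - TX), sq_nonneg (a*b + TX)]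
  have hJ0a : J0 * a ≤ 0 := by
    by_contra hcon
    push_neg at hcon
    have h1 : (J0*a)^2 ≤ ju^2 := by nlinarith
    have h2 : jj * TT ≤ J0^2 * TT := by nlinarith
    have h3 : 0 < J0^2 := by nlinarith [sq_nonneg a, sq_nonneg J0, sq_nonneg (J0*a)]
    nlinarith
  have hJ0b : J0 * b ≤ 0 := by nlinarith
  rcases le_or_gt 0 jv with h | h
  · linarith
  · by_contra hcon
    push_neg at hcon
    have h1 : (J0*b)^2 < jv^2 := by nlinarith
    have h2 : jj * XX ≤ J0^2 * XX := by nlinarith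
    have h3 : J0^2 * XX ≤ J0^2 * b^2 := by nlinarith [sq_nonneg J0]
    nlinarith


/-- fully scalar main lemma -/
lemma main_scalar (a b c V TT XX PP TX PT PX jj ju jv : ℝ)
    (hV : 0 ≤ V) (hTT0 : 0 ≤ TT) (hXX0 : 0 ≤ XX) (hPP0 : 0 ≤ PP) (hjj0 : 0 ≤ jj)
    (ht : TT - a * a < 0) (hξ : XX - b * b < 0) (htξ : TX - a * b < 0)
    (hcsTX : TX^2 ≤ TT * XX) (hcsPT : PT^2 ≤ PP * TT)
    (hcsju : ju^2 ≤ jj * TT) (hcsjv : jv^2 ≤ jj * XX)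
    (hju : ju = (PT - c*a) * PT + (-(1/2) * (PP - c^2)) * TT)
    (hjv : jv = (PT - c*a) * PX + (-(1/2) * (PP - c^2)) * TX)
    (hjj : jj = (PT - c*a) * ((PT - c*a) * PP + (-(1/2) * (PP - c^2)) * PT)
      + (-(1/2) * (PP - c^2)) * ((PT - c*a) * PT + (-(1/2) * (PP - c^2)) * TT)) :
    0 ≤ (PT - c*a) * (PX - c*b) - (1/2) * (TX - a*b) * ((PP - c*c) + V) := by
  have hTTa : TT < a^2 := by rw [sq]; linarith
  have hXXb : XX < b^2 := by rw [sq]; linarith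
  have hTXab : TX < a*b := by linarith
  obtain ⟨J0, hJ0⟩ : ∃ x : ℝ, x = (PT - c*a) * c + (-(1/2) * (PP - c^2)) * a := ⟨_, rfl⟩
  have hrcs : (PP - c^2) * (TT - a^2) ≤ (PT - c*a)^2 :=
    rev_cs a c TT PP PT hTT0 hPP0 hTTa hcsPT
  have hJt : J0 * a ≤ ju := by
    have expand : ju - J0 * a
        = (PT - c*a)^2 - (1/2) * (PP - c^2) * (TT - a^2) := by
      rw [hju, hJ0]; ring
    rcases le_or_gt (PP - c^2) 0 with hs | hs
    · have h1 : 0 ≤ (PP - c^2) * (TT - a^2) := by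
        have h := mul_nonneg (neg_nonneg.mpr hs)
          (neg_nonneg.mpr (show TT - a^2 ≤ 0 by linarith))
        rwa [neg_mul_neg] at h
      linarith [sq_nonneg (PT - c*a)]
    · have h1 : 0 ≤ (PP - c^2) * (a^2 - TT) := mul_nonneg hs.le (by linarith)
      have h2 : (PP - c^2) * (a^2 - TT) = -((PP - c^2) * (TT - a^2)) := by ring
      linarith [sq_nonneg (PT - c*a)]
  have hJJ : jj ≤ J0^2 := by
    have expand : jj - J0^2 = (1/4) * (PP - c^2)^2 * (TT - a^2) := by
      rw [hjj, hJ0]; ring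
    have h1 : 0 ≤ (PP - c^2)^2 * (a^2 - TT) :=
      mul_nonneg (sq_nonneg _) (by linarith)
    have h2 : (PP - c^2)^2 * (a^2 - TT) = -((PP - c^2)^2 * (TT - a^2)) := by ring
    linarith
  have hcone := cone_scalar a b J0 TT XX TX jj ju jv
    hTT0 hXX0 hjj0 hTTa hXXb hTXab hcsTX hcsju hcsjv hJJ hJt
  have final : jv - J0 * b
      = (PT - c*a) * (PX - c*b) - (1/2) * (TX - a*b) * (PP - c^2) := by
    rw [hjv, hJ0]; ring
  have hvterm : 0 ≤ V * (a*b - TX) := mul_nonneg hV (by linarith)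
  nlinarith [hvterm, hcone, final]

/-- A scalar field with gradient `p` and nonnegative potential value `V`
satisfies the dominant energy condition pointwise, off-shell:
`T(t,ξ) = η(p,t)η(p,ξ) − (1/2)η(t,ξ)(η(p,p) + V) ≥ 0` for co-oriented timelike `t, ξ`. -/
theorem scalar_field_dec
    (n : ℕ) (hn : 1 ≤ n) (p : Fin n → ℝ) (V : ℝ) (hV : 0 ≤ V)
    (t ξ : Fin n → ℝ)
    (ht : minkowski t t < 0) (hξ : minkowski ξ ξ < 0)
    (htξ : minkowski t ξ < 0) :
    0 ≤ minkowski p t * minkowski p ξ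
        - (1/2) * minkowski t ξ * (minkowski p p + V) := by
  rw [minkowski_eq hn] at ht hξ htξ
  rw [minkowski_eq hn p t, minkowski_eq hn p ξ, minkowski_eq hn t ξ, minkowski_eq hn p p]
  have hcc : p ⟨0, hn⟩ * p ⟨0, hn⟩ = p ⟨0, hn⟩ ^ 2 := by ring
  set a := t ⟨0, hn⟩
  set b := ξ ⟨0, hn⟩
  set c := p ⟨0, hn⟩
  set α : ℝ := msum p t - c * a with hα
  set β : ℝ := -(1/2) * (msum p p - c^2) with hβ
  set J : Fin n → ℝ := fun i => α * p i + β * t i with hJ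
  have hju : msum J t = α * msum p t + β * msum t t := by rw [hJ]; exact msum_lin α β p t t
  have hjv : msum J ξ = α * msum p ξ + β * msum t ξ := by rw [hJ]; exact msum_lin α β p t ξ
  have hjj : msum J J = α * (α * msum p p + β * msum p t)
      + β * (α * msum p t + β * msum t t) := by
    have h1 : msum J J = α * msum p J + β * msum t J := by rw [hJ]; exact msum_lin α β p t J
    rw [h1, msum_comm p J, msum_comm t J, hJ, msum_lin α β p t p, msum_lin α β p t t,
      msum_comm t p]
  exact main_scalar a b c V (msum t t) (msum ξ ξ) (msum p p) (msum t ξ) (msum p t) (msum p ξ)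
    (msum J J) (msum J t) (msum J ξ)
    hV (msum_nonneg t) (msum_nonneg ξ) (msum_nonneg p) (msum_nonneg J)
    ht hξ htξ
    (msum_cs t ξ) (msum_cs p t) (msum_cs J t) (msum_cs J ξ)
    hju hjv hjj
end

section
/- Let n ≥ 1, let F be a real antisymmetric n×n matrix (F_{ab} = −F_{ba}), let A ∈ ℝⁿ and m ∈ ℝ. For vectors t, u ∈ ℝⁿ define the contracted Maxwell/Proca stress tensor T(t,u) = ∑_{a,b,c,d} t_a u_b F_{ac} η_{cd} F_{bd} − (1/4)·η(t,u)·(F·F) + m²·((∑_a A_a t_a)(∑_b A_b u_b) − (1/2)·η(t,u)·η(A,A)), where F·F = ∑_{c,d,e,f} F_{cd} η_{ce} η_{df} F_{ef} and η_{ab} is the Minkowski matrix diag(−1,1,…,1). Then for every timelike vector t one has T(t,t) ≥ 0: the Maxwell and Proca fields satisfy the weak energy condition pointwise, off-shell. -/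
open scoped BigOperators

/-- The Minkowski metric matrix `diag(−1,1,…,1)`. -/
def etaMat (n : ℕ) : Matrix (Fin n) (Fin n) ℝ :=
  fun i j => if i = j then (if (i : ℕ) = 0 then -1 else 1) else 0

/-- The full contraction `F^{cd} F_{cd} = ∑ F_{cd} η_{ce} η_{df} F_{ef}`. -/
def FdotF {n : ℕ} (F : Matrix (Fin n) (Fin n) ℝ) : ℝ :=
  ∑ c : Fin n, ∑ d : Fin n, ∑ e : Fin n, ∑ f : Fin n,
    F c d * etaMat n c e * etaMat n d f * F e f

/-- The Maxwell/Proca stress tensor contracted with vectors `t` and `u`: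
`T(t,u) = ∑ t_a u_b F_{ac} η_{cd} F_{bd} − (1/4) η(t,u) F·F
          + m² ((A·t)(A·u) − (1/2) η(t,u) η(A,A))`. -/
noncomputable def procaT {n : ℕ} (F : Matrix (Fin n) (Fin n) ℝ) (A : Fin n → ℝ) (m : ℝ)
    (t u : Fin n → ℝ) : ℝ :=
  (∑ a : Fin n, ∑ b : Fin n, ∑ c : Fin n, ∑ d : Fin n,
      t a * u b * F a c * etaMat n c d * F b d)
    - (1/4) * minkowski t u * FdotF F
    + m^2 * ((∑ a : Fin n, A a * t a) * (∑ b : Fin n, A b * u b)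
              - (1/2) * minkowski t u * minkowski A A)

namespace WECaux

/-- diagonal entries of the Minkowski metric -/
noncomputable def gg {n : ℕ} (i : Fin n) : ℝ := if (i : ℕ) = 0 then -1 else 1

lemma minkowski_eq_gg {n : ℕ} (x y : Fin n → ℝ) :
    minkowski x y = ∑ i : Fin n, gg i * x i * y i := rfl

lemma sum2_congr {n : ℕ} {f g : Fin n → Fin n → ℝ} (h : ∀ a b, f a b = g a b) :
    ∑ a : Fin n, ∑ b : Fin n, f a b = ∑ a : Fin n, ∑ b : Fin n, g a b := by
  apply Finset.sum_congr rfl; intro a _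
  apply Finset.sum_congr rfl; intro b _
  exact h a b

lemma sum3_rot {ι : Type*} [Fintype ι] (f : ι → ι → ι → ℝ) :
    ∑ u : ι, ∑ v : ι, ∑ w : ι, f u v w = ∑ w : ι, ∑ u : ι, ∑ v : ι, f u v w := by
  rw [show (∑ u : ι, ∑ v : ι, ∑ w : ι, f u v w)
      = ∑ u : ι, ∑ w : ι, ∑ v : ι, f u v w from
    Finset.sum_congr rfl fun u _ => Finset.sum_comm ..]
  exact Finset.sum_comm ..

lemma eta_collapse {n : ℕ} (x : Fin n → ℝ) (c : Fin n) :
    ∑ e : Fin n, etaMat n c e * x e = gg c * x c := by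
  unfold etaMat gg
  simp [ite_mul, Finset.sum_ite_eq]

/-- the electric field `E_c = F_{ac} t^a` -/
noncomputable def Ev {n : ℕ} (F : Matrix (Fin n) (Fin n) ℝ) (t : Fin n → ℝ) (c : Fin n) : ℝ :=
  ∑ a : Fin n, t a * F a c

lemma tE_zero {n : ℕ} (F : Matrix (Fin n) (Fin n) ℝ)
    (hF : ∀ a b : Fin n, F a b = -F b a) (t : Fin n → ℝ) :
    ∑ c : Fin n, t c * Ev F t c = 0 := by
  have h : (∑ c : Fin n, ∑ a : Fin n, t c * t a * F a c)
      = -∑ c : Fin n, ∑ a : Fin n, t c * t a * F a c := by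
    calc (∑ c : Fin n, ∑ a : Fin n, t c * t a * F a c)
        = ∑ a : Fin n, ∑ c : Fin n, t c * t a * F a c := Finset.sum_comm ..
      _ = ∑ a : Fin n, ∑ c : Fin n, -(t a * t c * F c a) :=
          sum2_congr (fun a c => by rw [hF c a]; ring)
      _ = -∑ a : Fin n, ∑ c : Fin n, t a * t c * F c a := by
          simp [← Finset.sum_neg_distrib]
  have h2 : (∑ c : Fin n, t c * Ev F t c)
      = ∑ c : Fin n, ∑ a : Fin n, t c * t a * F a c := by
    apply Finset.sum_congr rfl; intro c _
    rw [Ev, Finset.mul_sum]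
    apply Finset.sum_congr rfl; intro a _; ring
  rw [h2]; linarith

lemma sum_gtt {n : ℕ} (t : Fin n → ℝ) :
    ∑ i : Fin n, gg i * t i * t i = minkowski t t := rfl

/-- the magnetic part, scaled by `η(t,t)`:
`B̃_{cd} = η(t,t) F_{cd} − (E_d (ηt)_c − E_c (ηt)_d)` -/
noncomputable def Bm {n : ℕ} (F : Matrix (Fin n) (Fin n) ℝ) (t : Fin n → ℝ) :
    Matrix (Fin n) (Fin n) ℝ :=
  fun c d => minkowski t t * F c d - (Ev F t d * gg c * t c - Ev F t c * gg d * t d)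

lemma Brow {n : ℕ} (F : Matrix (Fin n) (Fin n) ℝ)
    (hF : ∀ a b : Fin n, F a b = -F b a) (t : Fin n → ℝ) (d : Fin n) :
    ∑ c : Fin n, t c * Bm F t c d = 0 := by
  have h : ∀ c : Fin n, t c * Bm F t c d
      = minkowski t t * (t c * F c d) - Ev F t d * (gg c * t c * t c)
        + (gg d * t d) * (t c * Ev F t c) := fun c => by unfold Bm; ring
  rw [Finset.sum_congr rfl (fun c _ => h c), Finset.sum_add_distrib,
    Finset.sum_sub_distrib, ← Finset.mul_sum, ← Finset.mul_sum, ← Finset.mul_sum,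
    tE_zero F hF t, sum_gtt]
  have hE : (∑ c : Fin n, t c * F c d) = Ev F t d := rfl
  rw [hE]; ring

lemma Bm_anti {n : ℕ} (F : Matrix (Fin n) (Fin n) ℝ)
    (hF : ∀ a b : Fin n, F a b = -F b a) (t : Fin n → ℝ) (c d : Fin n) :
    Bm F t c d = -Bm F t d c := by
  unfold Bm; rw [hF c d]; ring

lemma Bcol {n : ℕ} (F : Matrix (Fin n) (Fin n) ℝ)
    (hF : ∀ a b : Fin n, F a b = -F b a) (t : Fin n → ℝ) (c : Fin n) :
    ∑ d : Fin n, Bm F t c d * t d = 0 := by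
  have h : ∀ d : Fin n, Bm F t c d * t d = -(t d * Bm F t d c) := fun d => by
    rw [Bm_anti F hF t c d]; ring
  rw [Finset.sum_congr rfl (fun d _ => h d), Finset.sum_neg_distrib,
    Brow F hF t c, neg_zero]

lemma FdotF_collapse {n : ℕ} (F : Matrix (Fin n) (Fin n) ℝ) :
    FdotF F = ∑ c : Fin n, ∑ d : Fin n, gg c * gg d * (F c d)^2 := by
  unfold FdotF
  apply Finset.sum_congr rfl; intro c _
  apply Finset.sum_congr rfl; intro d _
  rw [Finset.sum_comm]
  simp [etaMat, Finset.mul_sum, Finset.sum_mul, mul_ite, ite_mul, gg]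
  split_ifs <;> ring

/-- key decomposition: `η(t,t)² F·F = ∑ g g B̃² + 2 η(t,t) ∑ g E E` -/
lemma FdotF_id {n : ℕ} (F : Matrix (Fin n) (Fin n) ℝ)
    (hF : ∀ a b : Fin n, F a b = -F b a) (t : Fin n → ℝ) :
    (minkowski t t)^2 * FdotF F
      = (∑ c : Fin n, ∑ d : Fin n, gg c * gg d * (Bm F t c d)^2)
        + 2 * minkowski t t * (∑ c : Fin n, gg c * Ev F t c * Ev F t c) := by
  rw [FdotF_collapse, Finset.mul_sum]
  have step : ∀ c : Fin n, (minkowski t t)^2 * ∑ d : Fin n, gg c * gg d * (F c d)^2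
      = ∑ d : Fin n,
          (gg c * gg d * (Bm F t c d)^2
            + (2 * ((gg d * Ev F t d) * (t c * Bm F t c d))
                - 2 * ((gg c * Ev F t c) * (Bm F t c d * t d)))
            + ((gg d * Ev F t d * Ev F t d) * (gg c * t c * t c)
                + (gg c * Ev F t c * Ev F t c) * (gg d * t d * t d)
                - 2 * ((t c * Ev F t c) * (t d * Ev F t d)))) := by
    intro c
    rw [Finset.mul_sum]
    apply Finset.sum_congr rfl; intro d _
    have hBm : Bm F t c d
        = minkowski t t * F c d - (Ev F t d * gg c * t c - Ev F t c * gg d * t d) := rfl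
    rw [hBm]
    unfold gg
    split_ifs <;> ring
  rw [Finset.sum_congr rfl (fun c _ => step c)]
  simp only [Finset.sum_add_distrib, Finset.sum_sub_distrib]
  -- cross term 1: ∑_c ∑_d (g_d E_d)(t_c B_cd) = 0
  have hc1 : (∑ c : Fin n, ∑ d : Fin n, 2 * ((gg d * Ev F t d) * (t c * Bm F t c d))) = 0 := by
    rw [Finset.sum_comm]
    apply Finset.sum_eq_zero; intro d _
    have : ∀ c : Fin n, 2 * ((gg d * Ev F t d) * (t c * Bm F t c d))
        = (2 * (gg d * Ev F t d)) * (t c * Bm F t c d) := fun c => by ring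
    rw [Finset.sum_congr rfl (fun c _ => this c), ← Finset.mul_sum, Brow F hF t d, mul_zero]
  -- cross term 2
  have hc2 : (∑ c : Fin n, ∑ d : Fin n, 2 * ((gg c * Ev F t c) * (Bm F t c d * t d))) = 0 := by
    apply Finset.sum_eq_zero; intro c _
    have : ∀ d : Fin n, 2 * ((gg c * Ev F t c) * (Bm F t c d * t d))
        = (2 * (gg c * Ev F t c)) * (Bm F t c d * t d) := fun d => by ring
    rw [Finset.sum_congr rfl (fun d _ => this d), ← Finset.mul_sum, Bcol F hF t c, mul_zero]
  -- K² terms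
  have hmul := Fintype.sum_mul_sum (fun c : Fin n => gg c * Ev F t c * Ev F t c)
    (fun d : Fin n => gg d * t d * t d)
  have hk1 : (∑ c : Fin n, ∑ d : Fin n, (gg d * Ev F t d * Ev F t d) * (gg c * t c * t c))
      = (∑ c : Fin n, gg c * Ev F t c * Ev F t c) * minkowski t t := by
    calc (∑ c : Fin n, ∑ d : Fin n, (gg d * Ev F t d * Ev F t d) * (gg c * t c * t c))
        = ∑ d : Fin n, ∑ c : Fin n, (gg c * Ev F t c * Ev F t c) * (gg d * t d * t d) := by
          rw [Finset.sum_comm]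
      _ = (∑ c : Fin n, gg c * Ev F t c * Ev F t c) * ∑ d : Fin n, gg d * t d * t d := by
          rw [hmul, Finset.sum_comm]
      _ = (∑ c : Fin n, gg c * Ev F t c * Ev F t c) * minkowski t t := by rw [sum_gtt t]
  have hk2 : (∑ c : Fin n, ∑ d : Fin n, (gg c * Ev F t c * Ev F t c) * (gg d * t d * t d))
      = (∑ c : Fin n, gg c * Ev F t c * Ev F t c) * minkowski t t := by
    rw [← hmul, sum_gtt t]
  have hk3 : (∑ c : Fin n, ∑ d : Fin n, 2 * ((t c * Ev F t c) * (t d * Ev F t d))) = 0 := by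
    have : ∀ c : Fin n, (∑ d : Fin n, 2 * ((t c * Ev F t c) * (t d * Ev F t d)))
        = (2 * (t c * Ev F t c)) * ∑ d : Fin n, t d * Ev F t d := fun c => by
      rw [Finset.mul_sum]; apply Finset.sum_congr rfl; intro d _; ring
    rw [Finset.sum_congr rfl (fun c _ => this c), tE_zero F hF t]
    simp
  rw [hc1, hc2, hk1, hk2, hk3]
  ring

/-- reverse Cauchy–Schwarz for the Minkowski form, `t` timelike -/
theorem revCS {n : ℕ} (t x : Fin n → ℝ) (ht : minkowski t t < 0) :
    minkowski t t * minkowski x x ≤ (minkowski t x)^2 := by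
  have hn : 0 < n := by
    by_contra h
    push_neg at h
    interval_cases n
    · simp [minkowski] at ht
  set i0 : Fin n := ⟨0, hn⟩ with hi0
  have ht0 : t i0 ≠ 0 := by
    intro h
    have : 0 ≤ minkowski t t := by
      apply Finset.sum_nonneg
      intro i _
      by_cases hi : (i : ℕ) = 0
      · have : i = i0 := Fin.ext hi
        simp [this, h]
      · simp only [hi, if_neg, ite_false, one_mul]
        exact mul_self_nonneg _
    linarith
  set l : ℝ := -(x i0) / t i0 with hl
  have hy0 : x i0 + l * t i0 = 0 := by
    rw [hl, div_mul_cancel₀ _ ht0]; ring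
  have hyy : 0 ≤ minkowski (fun i => x i + l * t i) (fun i => x i + l * t i) := by
    apply Finset.sum_nonneg
    intro i _
    by_cases hi : (i : ℕ) = 0
    · have : i = i0 := Fin.ext hi
      simp [this, hy0]
    · simp only [hi, ite_false, one_mul]
      exact mul_self_nonneg _
  have hexp : minkowski (fun i => x i + l * t i) (fun i => x i + l * t i)
      = minkowski x x + 2 * l * minkowski t x + l^2 * minkowski t t := by
    simp only [minkowski, Finset.mul_sum]
    rw [← Finset.sum_add_distrib, ← Finset.sum_add_distrib]
    apply Finset.sum_congr rfl
    intro i _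
    ring
  rw [hexp] at hyy
  nlinarith [sq_nonneg (l * minkowski t t + minkowski t x), mul_nonneg hyy (neg_nonneg.mpr ht.le)]

/-- the (scaled) spatial projector `H = -η(t,t) η + t tᵀ` -/
noncomputable def Hm {n : ℕ} (t : Fin n → ℝ) : Matrix (Fin n) (Fin n) ℝ :=
  fun c d => -(minkowski t t) * etaMat n c d + t c * t d

lemma Hm_posSemidef {n : ℕ} (t : Fin n → ℝ) (ht : minkowski t t < 0) :
    (Hm t).PosSemidef := by
  rw [Matrix.posSemidef_iff_dotProduct_mulVec]
  constructor
  · ext i j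
    simp only [Matrix.conjTranspose_apply, Hm, etaMat, star_trivial]
    by_cases h : i = j
    · subst h; ring
    · have h' : ¬ j = i := fun hh => h hh.symm
      simp [h, h']; ring
  · intro x
    have hdot : dotProduct (star x) ((Hm t).mulVec x)
        = -(minkowski t t) * (∑ i : Fin n, gg i * x i * x i)
          + (∑ i : Fin n, t i * x i)^2 := by
      simp only [dotProduct, Matrix.mulVec, star_trivial, Pi.star_apply]
      have hrow : ∀ c : Fin n, (∑ d : Fin n, Hm t c d * x d)
          = -(minkowski t t) * (gg c * x c) + t c * ∑ d : Fin n, t d * x d := by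
        intro c
        have : ∀ d : Fin n, Hm t c d * x d
            = -(minkowski t t) * (etaMat n c d * x d) + t c * (t d * x d) := fun d => by
          unfold Hm; ring
        rw [Finset.sum_congr rfl (fun d _ => this d), Finset.sum_add_distrib,
          ← Finset.mul_sum, ← Finset.mul_sum, eta_collapse]
      rw [Finset.sum_congr rfl (fun c _ => by rw [hrow c])]
      rw [Finset.sum_congr rfl (fun c _ => by
        show x c * (-(minkowski t t) * (gg c * x c) + t c * ∑ d : Fin n, t d * x d)
          = -(minkowski t t) * (gg c * x c * x c) + (t c * x c) * (∑ d : Fin n, t d * x d)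
        ring)]
      rw [Finset.sum_add_distrib, ← Finset.mul_sum, ← Finset.sum_mul]
      ring
    rw [hdot]
    have hCS := revCS t (fun i => gg i * x i) ht
    have h1 : minkowski t (fun i => gg i * x i) = ∑ i : Fin n, t i * x i := by
      apply Finset.sum_congr rfl; intro i _
      by_cases hi : (i : ℕ) = 0 <;> simp [gg, hi] <;> ring
    have h2 : minkowski (fun i => gg i * x i) (fun i => gg i * x i)
        = ∑ i : Fin n, gg i * x i * x i := by
      apply Finset.sum_congr rfl; intro i _
      by_cases hi : (i : ℕ) = 0 <;> simp [gg, hi] <;> ring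
    rw [h1, h2] at hCS
    nlinarith

/-- generic: contraction against a Gram matrix is a sum of squares -/
lemma sos {ι : Type*} [Fintype ι] (P : ι → ℝ) (L : ι → ι → ℝ) :
    ∑ u : ι, ∑ v : ι, P u * P v * (∑ w : ι, L w u * L w v)
      = ∑ w : ι, (∑ u : ι, L w u * P u)^2 := by
  have hL : ∀ u v : ι, P u * P v * (∑ w : ι, L w u * L w v)
      = ∑ w : ι, (L w u * P u) * (L w v * P v) := by
    intro u v
    rw [Finset.mul_sum]
    apply Finset.sum_congr rfl; intro w _; ring
  calc ∑ u : ι, ∑ v : ι, P u * P v * (∑ w : ι, L w u * L w v)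
      = ∑ u : ι, ∑ v : ι, ∑ w : ι, (L w u * P u) * (L w v * P v) := by
        apply Finset.sum_congr rfl; intro u _
        apply Finset.sum_congr rfl; intro v _
        exact hL u v
    _ = ∑ w : ι, ∑ u : ι, ∑ v : ι, (L w u * P u) * (L w v * P v) := sum3_rot _
    _ = ∑ w : ι, (∑ u : ι, L w u * P u)^2 := by
        apply Finset.sum_congr rfl; intro w _
        rw [sq, Fintype.sum_mul_sum]

lemma SB_nonneg {n : ℕ} (F : Matrix (Fin n) (Fin n) ℝ)
    (hF : ∀ a b : Fin n, F a b = -F b a) (t : Fin n → ℝ) (ht : minkowski t t < 0) :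
    0 ≤ ∑ c : Fin n, ∑ d : Fin n, gg c * gg d * (Bm F t c d)^2 := by
  obtain ⟨L, hL⟩ : ∃ L : Matrix (Fin n) (Fin n) ℝ, Hm t = star L * L := by
    open scoped MatrixOrder in
    exact CStarAlgebra.nonneg_iff_eq_star_mul_self.mp (Hm_posSemidef t ht).nonneg
  have Happ : ∀ c e : Fin n, Hm t c e = ∑ k : Fin n, L k c * L k e := by
    intro c e
    rw [hL]
    simp [Matrix.mul_apply, Matrix.conjTranspose_apply]
  -- contraction lemmas
  have HB1 : ∀ c f : Fin n, (∑ e : Fin n, Hm t c e * Bm F t e f)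
      = -(minkowski t t) * (gg c * Bm F t c f) := by
    intro c f
    have h : ∀ e : Fin n, Hm t c e * Bm F t e f
        = -(minkowski t t) * (etaMat n c e * Bm F t e f) + t c * (t e * Bm F t e f) := by
      intro e; unfold Hm; ring
    rw [Finset.sum_congr rfl (fun e _ => h e), Finset.sum_add_distrib,
      ← Finset.mul_sum, ← Finset.mul_sum, eta_collapse (fun e => Bm F t e f) c,
      Brow F hF t f, mul_zero, add_zero]
  have HB2 : ∀ d e : Fin n, (∑ f : Fin n, Hm t d f * Bm F t e f)
      = -(minkowski t t) * (gg d * Bm F t e d) := by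
    intro d e
    have h : ∀ f : Fin n, Hm t d f * Bm F t e f
        = -(minkowski t t) * (etaMat n d f * Bm F t e f) + t d * (Bm F t e f * t f) := by
      intro f; unfold Hm; ring
    rw [Finset.sum_congr rfl (fun f _ => h f), Finset.sum_add_distrib,
      ← Finset.mul_sum, ← Finset.mul_sum, eta_collapse (fun f => Bm F t e f) d,
      Bcol F hF t e, mul_zero, add_zero]
  -- the quadruple contraction with H equals τ² SB
  have hSH : (∑ c : Fin n, ∑ d : Fin n, ∑ e : Fin n, ∑ f : Fin n,
        Bm F t c d * Bm F t e f * (Hm t c e * Hm t d f))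
      = (minkowski t t)^2
        * ∑ c : Fin n, ∑ d : Fin n, gg c * gg d * (Bm F t c d)^2 := by
    rw [Finset.mul_sum]
    apply Finset.sum_congr rfl; intro c _
    rw [Finset.mul_sum]
    apply Finset.sum_congr rfl; intro d _
    calc (∑ e : Fin n, ∑ f : Fin n, Bm F t c d * Bm F t e f * (Hm t c e * Hm t d f))
        = ∑ e : Fin n, (Bm F t c d * Hm t c e) * ∑ f : Fin n, Hm t d f * Bm F t e f := by
          apply Finset.sum_congr rfl; intro e _
          rw [Finset.mul_sum]
          apply Finset.sum_congr rfl; intro f _; ring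
      _ = ∑ e : Fin n, (Bm F t c d * Hm t c e) * (-(minkowski t t) * (gg d * Bm F t e d)) := by
          apply Finset.sum_congr rfl; intro e _
          rw [HB2 d e]
      _ = (Bm F t c d * (-(minkowski t t) * gg d)) * ∑ e : Fin n, Hm t c e * Bm F t e d := by
          rw [Finset.mul_sum]
          apply Finset.sum_congr rfl; intro e _; ring
      _ = (Bm F t c d * (-(minkowski t t) * gg d))
            * (-(minkowski t t) * (gg c * Bm F t c d)) := by rw [HB1 c d]
      _ = minkowski t t ^ 2 * (gg c * gg d * Bm F t c d ^ 2) := by ring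
  -- the same contraction is a sum of squares
  have hSOS : 0 ≤ ∑ c : Fin n, ∑ d : Fin n, ∑ e : Fin n, ∑ f : Fin n,
      Bm F t c d * Bm F t e f * (Hm t c e * Hm t d f) := by
    have hprod : (∑ c : Fin n, ∑ d : Fin n, ∑ e : Fin n, ∑ f : Fin n,
          Bm F t c d * Bm F t e f * (Hm t c e * Hm t d f))
        = ∑ u : Fin n × Fin n, ∑ v : Fin n × Fin n,
            Bm F t u.1 u.2 * Bm F t v.1 v.2
              * (∑ w : Fin n × Fin n,
                  (L w.1 u.1 * L w.2 u.2) * (L w.1 v.1 * L w.2 v.2)) := by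
      rw [Fintype.sum_prod_type]
      apply Finset.sum_congr rfl; intro c _
      apply Finset.sum_congr rfl; intro d _
      rw [Fintype.sum_prod_type]
      apply Finset.sum_congr rfl; intro e _
      apply Finset.sum_congr rfl; intro f _
      rw [Fintype.sum_prod_type]
      have : (∑ k : Fin n, ∑ l : Fin n, (L k c * L l d) * (L k e * L l f))
          = (∑ k : Fin n, L k c * L k e) * (∑ l : Fin n, L l d * L l f) := by
        rw [Fintype.sum_mul_sum]
        apply Finset.sum_congr rfl; intro k _
        apply Finset.sum_congr rfl; intro l _; ring
      rw [Finset.sum_congr rfl (fun k _ => Finset.sum_congr rfl (fun l _ => rfl)), this,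
        ← Happ c e, ← Happ d f]
    rw [hprod]
    rw [sos (fun u : Fin n × Fin n => Bm F t u.1 u.2)
      (fun w u : Fin n × Fin n => L w.1 u.1 * L w.2 u.2)]
    apply Finset.sum_nonneg; intro w _
    exact sq_nonneg _
  rw [hSH] at hSOS
  have hne : minkowski t t ≠ 0 := ne_of_lt ht
  have hτ : (0:ℝ) < (minkowski t t)^2 := by positivity
  nlinarith [hSOS, hτ]

lemma term1 {n : ℕ} (F : Matrix (Fin n) (Fin n) ℝ) (t : Fin n → ℝ) :
    (∑ a : Fin n, ∑ b : Fin n, ∑ c : Fin n, ∑ d : Fin n,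
        t a * t b * F a c * etaMat n c d * F b d)
      = ∑ c : Fin n, gg c * Ev F t c * Ev F t c := by
  calc (∑ a : Fin n, ∑ b : Fin n, ∑ c : Fin n, ∑ d : Fin n,
        t a * t b * F a c * etaMat n c d * F b d)
      = ∑ a : Fin n, ∑ b : Fin n, ∑ c : Fin n,
          (t a * t b * F a c) * (gg c * F b c) := by
        apply Finset.sum_congr rfl; intro a _
        apply Finset.sum_congr rfl; intro b _
        apply Finset.sum_congr rfl; intro c _
        rw [show (∑ d : Fin n, t a * t b * F a c * etaMat n c d * F b d)
            = ∑ d : Fin n, (t a * t b * F a c) * (etaMat n c d * F b d) from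
          Finset.sum_congr rfl (fun d _ => by ring), ← Finset.mul_sum,
          eta_collapse (fun d => F b d) c]
    _ = ∑ c : Fin n, ∑ a : Fin n, ∑ b : Fin n,
          (t a * t b * F a c) * (gg c * F b c) := sum3_rot _
    _ = ∑ c : Fin n, gg c * Ev F t c * Ev F t c := by
        apply Finset.sum_congr rfl; intro c _
        have h1 : Ev F t c * Ev F t c
            = ∑ a : Fin n, ∑ b : Fin n, (t a * F a c) * (t b * F b c) :=
          Fintype.sum_mul_sum _ _
        rw [show gg c * Ev F t c * Ev F t c = gg c * (Ev F t c * Ev F t c) from by ring,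
          h1, Finset.mul_sum]
        apply Finset.sum_congr rfl; intro a _
        rw [Finset.mul_sum]
        apply Finset.sum_congr rfl; intro b _
        ring

end WECaux

/-- The Maxwell/Proca field satisfies the weak energy condition pointwise,
off-shell: `T(t,t) ≥ 0` for every timelike `t`. -/
theorem maxwell_proca_wec
    (n : ℕ) (hn : 1 ≤ n) (F : Matrix (Fin n) (Fin n) ℝ)
    (hF : ∀ a b : Fin n, F a b = -F b a)
    (A : Fin n → ℝ) (m : ℝ) :
    ∀ t : Fin n → ℝ, minkowski t t < 0 → 0 ≤ procaT F A m t t := by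
  intro t ht
  open WECaux in
  unfold procaT
  rw [WECaux.term1 F t]
  set τ := minkowski t t with hτdef
  set mEE := ∑ c : Fin n, WECaux.gg c * WECaux.Ev F t c * WECaux.Ev F t c with hmEE
  set SB := ∑ c : Fin n, ∑ d : Fin n,
    WECaux.gg c * WECaux.gg d * (WECaux.Bm F t c d)^2 with hSBdef
  set X := ∑ a : Fin n, A a * t a with hX
  -- electric part is nonnegative
  have hEE : 0 ≤ mEE := by
    have hCS := WECaux.revCS t (fun i => WECaux.gg i * WECaux.Ev F t i) ht
    have h1 : minkowski t (fun i => WECaux.gg i * WECaux.Ev F t i)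
        = ∑ i : Fin n, t i * WECaux.Ev F t i := by
      apply Finset.sum_congr rfl; intro i _
      by_cases hi : (i : ℕ) = 0 <;> simp [WECaux.gg, hi] <;> ring
    have h2 : minkowski (fun i => WECaux.gg i * WECaux.Ev F t i)
        (fun i => WECaux.gg i * WECaux.Ev F t i) = mEE := by
      apply Finset.sum_congr rfl; intro i _
      by_cases hi : (i : ℕ) = 0 <;> simp [WECaux.gg, hi] <;> ring
    rw [h1, h2, WECaux.tE_zero F hF t] at hCS
    nlinarith [hCS, ht]
  have hSB : 0 ≤ SB := WECaux.SB_nonneg F hF t ht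
  -- mass term is nonnegative
  have hmass : 0 ≤ X^2 - (1/2) * τ * minkowski A A := by
    have hCS := WECaux.revCS t (fun i => WECaux.gg i * A i) ht
    have h1 : minkowski t (fun i => WECaux.gg i * A i) = X := by
      rw [hX]
      apply Finset.sum_congr rfl; intro i _
      by_cases hi : (i : ℕ) = 0 <;> simp [WECaux.gg, hi] <;> ring
    have h2 : minkowski (fun i => WECaux.gg i * A i) (fun i => WECaux.gg i * A i)
        = minkowski A A := by
      apply Finset.sum_congr rfl; intro i _
      by_cases hi : (i : ℕ) = 0 <;> simp [WECaux.gg, hi] <;> ring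
    rw [h1, h2] at hCS
    nlinarith [hCS, sq_nonneg X]
  have hid := WECaux.FdotF_id F hF t
  rw [← hτdef, ← hmEE, ← hSBdef] at hid
  have hτ2 : (0:ℝ) < τ^2 := by
    have : τ ≠ 0 := ne_of_lt ht
    positivity
  have hG : τ^2 * (mEE - 1/4 * τ * FdotF F + m^2 * (X * X - 1/2 * τ * minkowski A A))
      = 1/2 * τ^2 * mEE + 1/4 * (-τ) * SB
        + m^2 * τ^2 * (X^2 - (1/2) * τ * minkowski A A) := by
    linear_combination (-(1/4) * τ) * hid
  have hRHS : 0 ≤ 1/2 * τ^2 * mEE + 1/4 * (-τ) * SB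
      + m^2 * τ^2 * (X^2 - (1/2) * τ * minkowski A A) := by
    have t1 : 0 ≤ 1/2 * τ^2 * mEE := by
      apply mul_nonneg _ hEE; positivity
    have t2 : 0 ≤ 1/4 * (-τ) * SB := by
      apply mul_nonneg _ hSB; linarith
    have t3 : 0 ≤ m^2 * τ^2 * (X^2 - (1/2) * τ * minkowski A A) := by
      apply mul_nonneg _ hmass; positivity
    linarith
  by_contra hcon
  push_neg at hcon
  nlinarith [mul_pos hτ2 (neg_pos.mpr hcon), hG, hRHS]
end

section
/- Let n ≥ 1, let F be a real antisymmetric n×n matrix, let A ∈ ℝⁿ and m ∈ ℝ. For co-oriented timelike vectors t, ξ ∈ ℝⁿ (η(t,t) < 0, η(ξ,ξ) < 0, η(t,ξ) < 0), the contracted Maxwell/Proca stress tensor T(t,ξ) = ∑_{a,b,c,d} t_a ξ_b F_{ac} η_{cd} F_{bd} − (1/4)·η(t,ξ)·(F·F) + m²·((∑_a A_a t_a)(∑_b A_b ξ_b) − (1/2)·η(t,ξ)·η(A,A)) is nonnegative, where F·F = ∑_{c,d,e,f} F_{cd} η_{ce} η_{df} F_{ef}: the Maxwell and Proca fields satisfy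 the dominant energy condition pointwise, off-shell. -/
open scoped BigOperators

namespace MPdec

variable {m : ℕ}
def dotE {m : ℕ} (x y : Fin m → ℝ) : ℝ := ∑ i, x i * y i
def actE {m : ℕ} (C : Matrix (Fin m) (Fin m) ℝ) (w : Fin m → ℝ) : Fin m → ℝ :=
  fun j => ∑ i, w i * C i j
def msqE {m : ℕ} (C : Matrix (Fin m) (Fin m) ℝ) : ℝ := ∑ i, ∑ j, (C i j)^2
lemma dotE_comm (x y : Fin m → ℝ) : dotE x y = dotE y x := by
  unfold dotE; exact Finset.sum_congr rfl fun i _ => mul_comm _ _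
lemma dotE_self_nonneg (x : Fin m → ℝ) : 0 ≤ dotE x x :=
  Finset.sum_nonneg fun _ _ => mul_self_nonneg _
lemma dotE_self_eq_zero {x : Fin m → ℝ} (h : dotE x x = 0) : ∀ i, x i = 0 := by
  intro i
  have := (Finset.sum_eq_zero_iff_of_nonneg (fun i _ => mul_self_nonneg (x i))).mp h i (Finset.mem_univ i)
  exact mul_self_eq_zero.mp this
lemma dotE_CS (x y : Fin m → ℝ) : (dotE x y)^2 ≤ dotE x x * dotE y y := by
  have h := Finset.sum_mul_sq_le_sq_mul_sq Finset.univ x y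
  simpa [dotE, sq] using h
lemma msqE_nonneg (C : Matrix (Fin m) (Fin m) ℝ) : 0 ≤ msqE C :=
  Finset.sum_nonneg fun _ _ => Finset.sum_nonneg fun _ _ => sq_nonneg _
lemma dotE_as_double (x y : Fin m → ℝ) (C : Matrix (Fin m) (Fin m) ℝ) :
    dotE (actE C x) y = ∑ i, ∑ j, x i * C i j * y j := by
  unfold dotE actE
  rw [Finset.sum_comm]
  exact Finset.sum_congr rfl fun j _ => by rw [Finset.sum_mul]
lemma actE_skew {C : Matrix (Fin m) (Fin m) ℝ} (hC : ∀ i j, C i j = -C j i)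
    (x y : Fin m → ℝ) : dotE (actE C x) y = - dotE (actE C y) x := by
  rw [dotE_as_double, dotE_as_double, ← Finset.sum_neg_distrib, Finset.sum_comm]
  refine Finset.sum_congr rfl fun i _ => ?_
  rw [← Finset.sum_neg_distrib]
  refine Finset.sum_congr rfl fun j _ => ?_
  rw [hC i j]; ring
lemma actE_self {C : Matrix (Fin m) (Fin m) ℝ} (hC : ∀ i j, C i j = -C j i)
    (x : Fin m → ℝ) : dotE (actE C x) x = 0 := by
  have h := actE_skew hC x x
  linarith
lemma msqE_comb (α : ℝ) (C : Matrix (Fin m) (Fin m) ℝ) (x y : Fin m → ℝ) :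
    msqE (fun i j => α * C i j - (x i * y j - y i * x j)) =
      α^2 * msqE C - 2*α*(dotE (actE C x) y - dotE (actE C y) x)
        + 2*(dotE x x * dotE y y - (dotE x y)^2) := by
  rw [dotE_as_double, dotE_as_double]
  unfold msqE dotE
  have h : ∀ i j : Fin m, (α * C i j - (x i * y j - y i * x j))^2 =
      α^2*(C i j)^2 - (2*α)*(x i * C i j * y j) + (2*α)*(y i * C i j * x j)
      + (x i*x i)*(y j*y j) + (y i*y i)*(x j*x j) - (2*((x i*y i)*(x j*y j))) := by
    intros; ring
  simp only [h, Finset.sum_add_distrib, Finset.sum_sub_distrib, ← Finset.mul_sum,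
    ← Finset.sum_mul]
  ring

lemma two_term {C : Matrix (Fin m) (Fin m) ℝ} (hC : ∀ i j, C i j = -C j i)
    (w : Fin m → ℝ) :
    dotE (actE C w) (actE C w) ≤ (1/2) * dotE w w * msqE C := by
  set y := actE C w with hy
  have h0 := msqE_nonneg (fun i j => (dotE w w) * C i j - (w i * y j - y i * w j))
  rw [msqE_comb] at h0
  have h1 : dotE (actE C w) y = dotE y y := by rw [← hy]
  have h2 : dotE (actE C y) w = - dotE y y := by rw [actE_skew hC, h1]
  have h3 : dotE w y = 0 := by rw [dotE_comm, hy, actE_self hC]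
  rw [h1, h2, h3] at h0
  rcases eq_or_lt_of_le (dotE_self_nonneg w) with hw | hw
  · have hz : ∀ j, y j = 0 := by
      intro j
      rw [hy]
      unfold actE
      refine Finset.sum_eq_zero fun i _ => ?_
      rw [dotE_self_eq_zero hw.symm i, zero_mul]
    have : dotE y y = 0 := Finset.sum_eq_zero fun i _ => by rw [hz i, zero_mul]
    rw [this]
    have := msqE_nonneg C
    nlinarith [dotE_self_nonneg w]
  · nlinarith [hw]

lemma dotE_comb2 (a b : ℝ) (x y : Fin m → ℝ) :
    dotE (fun i => a * x i + b * y i) (fun i => a * x i + b * y i)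
      = a^2 * dotE x x + 2*a*b*dotE x y + b^2 * dotE y y := by
  unfold dotE
  have h : ∀ i : Fin m, (a * x i + b * y i) * (a * x i + b * y i)
      = a^2*(x i * x i) + (2*a*b)*(x i * y i) + b^2*(y i * y i) := by intros; ring
  simp only [h, Finset.sum_add_distrib, ← Finset.mul_sum]

lemma key_ineq {B : Matrix (Fin m) (Fin m) ℝ} (hB : ∀ i j, B i j = -B j i)
    (p q : Fin m → ℝ) (hpq : dotE p q = 0) (hP : 0 < dotE p p) :
    dotE q q * dotE (actE B p) (actE B p) + dotE p p * dotE (actE B q) (actE B q)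
      ≤ (dotE p p * dotE q q / 2) * msqE B + (dotE (actE B p) q)^2 := by
  set P := dotE p p with hPdef
  set X := actE B p with hX
  set bb := actE B q with hbb
  set β := dotE X q with hβ
  set B₁ : Matrix (Fin m) (Fin m) ℝ := fun i j => P * B i j - (p i * X j - X i * p j) with hB₁
  have hB₁anti : ∀ i j, B₁ i j = -B₁ j i := by
    intro i j; simp only [hB₁]; rw [hB i j]; ring
  have hmsqB₁ : msqE B₁ = P^2 * msqE B - 2 * P * dotE X X := by
    rw [hB₁, msqE_comb]
    have e1 : dotE (actE B p) X = dotE X X := by rw [← hX]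
    have e2 : dotE (actE B X) p = - dotE X X := by rw [actE_skew hB, e1]
    have e3 : dotE p X = 0 := by rw [dotE_comm, hX, actE_self hB]
    rw [e1, e2, e3, ← hPdef]; ring
  have hact : ∀ j, actE B₁ q j = P * bb j + β * p j := by
    intro j
    unfold actE
    simp only [hB₁]
    have h : ∀ i : Fin m, q i * (P * B i j - (p i * X j - X i * p j))
        = P * (q i * B i j) - X j * (q i * p i) + p j * (q i * X i) := by intros; ring
    simp only [h, Finset.sum_add_distrib, Finset.sum_sub_distrib, ← Finset.mul_sum]
    have e4 : (∑ i, q i * p i) = 0 := by rw [← dotE, dotE_comm]; exact hpq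
    have e5 : (∑ i, q i * X i) = β := by rw [← dotE, dotE_comm, hβ]
    rw [e4, e5]
    simp only [hbb, actE]
    ring
  have htt := two_term hB₁anti q
  have hfun : actE B₁ q = fun j => P * bb j + β * p j := funext hact
  rw [hfun, dotE_comb2, hmsqB₁] at htt
  have e6 : dotE bb p = -β := by rw [hbb, actE_skew hB, ← hX, ← hβ]
  have e7 : dotE bb bb = dotE (actE B q) (actE B q) := by rw [hbb]
  have e8 : dotE X X = dotE (actE B p) (actE B p) := by rw [hX]
  rw [e6] at htt
  nlinarith [htt, hP]

lemma dotE_comb3 (a b c : ℝ) (x y z : Fin m → ℝ) :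
    dotE (fun i => a * x i + b * y i + c * z i) (fun i => a * x i + b * y i + c * z i)
      = a^2 * dotE x x + b^2 * dotE y y + c^2 * dotE z z
        + 2*a*b*dotE x y + 2*a*c*dotE x z + 2*b*c*dotE y z := by
  unfold dotE
  have h : ∀ i : Fin m, (a * x i + b * y i + c * z i) * (a * x i + b * y i + c * z i)
      = a^2*(x i * x i) + b^2*(y i * y i) + c^2*(z i * z i)
        + (2*a*b)*(x i * y i) + (2*a*c)*(x i * z i) + (2*b*c)*(y i * z i) := by intros; ring
  simp only [h, Finset.sum_add_distrib, ← Finset.mul_sum]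

lemma dotE_lin3 (a b c : ℝ) (x y z w : Fin m → ℝ) :
    dotE w (fun i => a * x i + b * y i + c * z i)
      = a * dotE w x + b * dotE w y + c * dotE w z := by
  unfold dotE
  have h : ∀ i : Fin m, w i * (a * x i + b * y i + c * z i)
      = a*(w i * x i) + b*(w i * y i) + c*(w i * z i) := by intros; ring
  simp only [h, Finset.sum_add_distrib, ← Finset.mul_sum]

lemma dotE_zero_left {x : Fin m → ℝ} (hx : ∀ i, x i = 0) (z : Fin m → ℝ) :
    dotE x z = 0 :=
  Finset.sum_eq_zero fun i _ => by rw [hx i, zero_mul]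

lemma dotE_add_add (x y : Fin m → ℝ) :
    dotE (fun i => x i + y i) (fun i => x i + y i)
      = dotE x x + 2*dotE x y + dotE y y := by
  unfold dotE
  have h : ∀ i : Fin m, (x i + y i) * (x i + y i)
      = x i * x i + 2*(x i * y i) + y i * y i := by intros; ring
  simp only [h, Finset.sum_add_distrib, ← Finset.mul_sum]

lemma dotE_sub_sub (x y : Fin m → ℝ) :
    dotE (fun i => x i - y i) (fun i => x i - y i)
      = dotE x x - 2*dotE x y + dotE y y := by
  unfold dotE
  have h : ∀ i : Fin m, (x i - y i) * (x i - y i)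
      = x i * x i - 2*(x i * y i) + y i * y i := by intros; ring
  simp only [h, Finset.sum_add_distrib, Finset.sum_sub_distrib, ← Finset.mul_sum]

lemma dotE_add_left (x y z : Fin m → ℝ) :
    dotE (fun i => x i + y i) z = dotE x z + dotE y z := by
  unfold dotE
  have h : ∀ i : Fin m, (x i + y i) * z i = x i * z i + y i * z i := by intros; ring
  simp only [h, Finset.sum_add_distrib]

lemma dotE_sub_left (x y z : Fin m → ℝ) :
    dotE (fun i => x i - y i) z = dotE x z - dotE y z := by
  unfold dotE
  have h : ∀ i : Fin m, (x i - y i) * z i = x i * z i - y i * z i := by intros; ring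
  simp only [h, Finset.sum_sub_distrib]

lemma dotE_add_right (x y z : Fin m → ℝ) :
    dotE z (fun i => x i + y i) = dotE z x + dotE z y := by
  rw [dotE_comm, dotE_add_left, dotE_comm x z, dotE_comm y z]

lemma dotE_sub_right (x y z : Fin m → ℝ) :
    dotE z (fun i => x i - y i) = dotE z x - dotE z y := by
  rw [dotE_comm, dotE_sub_left, dotE_comm x z, dotE_comm y z]

set_option maxHeartbeats 2000000 in
lemma maxwell_core {B : Matrix (Fin m) (Fin m) ℝ} (hB : ∀ i j, B i j = -B j i)
    (E u v : Fin m → ℝ) (hu : dotE u u = 1) (hv : dotE v v = 1) :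
    0 ≤ dotE E E - dotE u E * dotE v E + dotE E (actE B v) + dotE (actE B u) E
        + dotE (actE B u) (actE B v) - (1/4)*(-1 + dotE u v)*(msqE B - 2*dotE E E) := by
  set TM := dotE E E - dotE u E * dotE v E + dotE E (actE B v) + dotE (actE B u) E
        + dotE (actE B u) (actE B v) - (1/4)*(-1 + dotE u v)*(msqE B - 2*dotE E E) with hTMdef
  set p : Fin m → ℝ := fun i => u i + v i with hp
  set q : Fin m → ℝ := fun i => u i - v i with hq
  set X := actE B p with hXd
  set b := actE B q with hbd
  -- pointwise descriptions of X and b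
  have hXf : X = fun j => actE B u j + actE B v j := by
    funext j
    rw [hXd, hp]
    unfold actE
    simp only [add_mul, Finset.sum_add_distrib]
  have hbf : b = fun j => actE B u j - actE B v j := by
    funext j
    rw [hbd, hq]
    unfold actE
    simp only [sub_mul, Finset.sum_sub_distrib]
  -- expansions to u,v atoms
  have hpp : dotE p p = dotE u u + 2*dotE u v + dotE v v := by rw [hp]; exact dotE_add_add u v
  have hqq : dotE q q = dotE u u - 2*dotE u v + dotE v v := by rw [hq]; exact dotE_sub_sub u v
  have hpE : dotE p E = dotE u E + dotE v E := by rw [hp]; exact dotE_add_left u v E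
  have hqE : dotE q E = dotE u E - dotE v E := by rw [hq]; exact dotE_sub_left u v E
  have hEX : dotE E X = dotE E (actE B u) + dotE E (actE B v) := by
    rw [hXf]; exact dotE_add_right _ _ E
  have hXX : dotE X X = dotE (actE B u) (actE B u) + 2*dotE (actE B u) (actE B v)
      + dotE (actE B v) (actE B v) := by rw [hXf]; exact dotE_add_add _ _
  have hbb : dotE b b = dotE (actE B u) (actE B u) - 2*dotE (actE B u) (actE B v)
      + dotE (actE B v) (actE B v) := by rw [hbf]; exact dotE_sub_sub _ _
  have hcomm1 : dotE (actE B u) E = dotE E (actE B u) := dotE_comm _ _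
  -- the conversion identity
  have hTM : 4 * TM = dotE p p * dotE E E - (dotE p E)^2 + (dotE q E)^2 + 4 * dotE E X
      + dotE X X - dotE b b + (dotE q q / 2) * msqE B := by
    rw [hTMdef, hpp, hqq, hpE, hqE, hEX, hXX, hbb, hcomm1, hu, hv]
    ring
  have hP4 : dotE p p + dotE q q = 4 := by rw [hpp, hqq, hu, hv]; ring
  have hpq0 : dotE p q = 0 := by
    rw [hp, hq, dotE_add_left, dotE_sub_right, dotE_sub_right, dotE_comm v u, hu, hv]
    ring
  have hPnn := dotE_self_nonneg p
  have hQnn := dotE_self_nonneg q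
  have hXp : dotE p X = 0 := by rw [dotE_comm, hXd]; exact actE_self hB p
  clear_value TM p q X b
  rcases eq_or_lt_of_le hPnn with hP0 | hPpos
  · -- P = 0 : p ≡ 0, X ≡ 0
    have hpz : ∀ i, p i = 0 := dotE_self_eq_zero hP0.symm
    have hXz : ∀ j, X j = 0 := by
      intro j; rw [hXd]; unfold actE
      exact Finset.sum_eq_zero fun i _ => by rw [hpz i, zero_mul]
    have hEX0 : dotE E X = 0 := by rw [dotE_comm]; exact dotE_zero_left hXz E
    have hXX0 : dotE X X = 0 := dotE_zero_left hXz X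
    have hQ4 : dotE q q = 4 := by linarith
    have htt := two_term hB q
    rw [← hbd, hQ4] at htt
    have hpE0 : dotE p E = 0 := dotE_zero_left hpz E
    rw [← hP0, hEX0, hXX0, hpE0, hQ4] at hTM
    have h4 : 0 ≤ 4 * TM := by nlinarith [sq_nonneg (dotE q E), htt]
    linarith
  · -- P > 0
    set W : Fin m → ℝ := fun i => dotE p p * E i + (-(dotE p E)) * p i + 2 * X i with hW
    clear_value W
    have hdWW : dotE W W = (dotE p p)^2 * dotE E E - dotE p p * (dotE p E)^2
        + 4 * dotE p p * dotE E X + 4 * dotE X X := by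
      rw [hW, dotE_comb3 (dotE p p) (-(dotE p E)) 2 E p X, dotE_comm E p, hXp]
      ring
    rcases eq_or_lt_of_le hQnn with hQ0 | hQpos
    · -- Q = 0 : q ≡ 0, b ≡ 0
      have hqz : ∀ i, q i = 0 := dotE_self_eq_zero hQ0.symm
      have hbz : ∀ j, b j = 0 := by
        intro j; rw [hbd]; unfold actE
        exact Finset.sum_eq_zero fun i _ => by rw [hqz i, zero_mul]
      have hbb0 : dotE b b = 0 := dotE_zero_left hbz b
      have hqE0 : dotE q E = 0 := dotE_zero_left hqz E
      have hPv : dotE p p = 4 := by linarith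
      rw [hbb0, hqE0, ← hQ0, hPv] at hTM
      rw [hPv] at hdWW
      have := dotE_self_nonneg W
      nlinarith [hTM, hdWW, this]
    · -- P > 0, Q > 0 : main case
      have hqp0 : dotE q p = 0 := by rw [dotE_comm]; exact hpq0
      have hdqW : dotE q W = dotE p p * dotE q E + 2 * dotE X q := by
        rw [hW, dotE_lin3, hqp0, dotE_comm q X]
        ring
      have hkey := key_ineq hB p q hpq0 hPpos
      rw [← hXd, ← hbd] at hkey
      have hCS : (dotE q W)^2 ≤ dotE q q * dotE W W := by
        have := dotE_CS q W
        linarith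
      have master : 4 * (dotE p p)^2 * TM
          = dotE p p * dotE W W + (dotE q W - 2*dotE X q)^2
            + dotE p p * ((dotE p p * dotE q q/2) * msqE B
                - dotE q q * dotE X X - dotE p p * dotE b b) := by
        rw [hdWW, hdqW]
        linear_combination (dotE p p)^2 * hTM + dotE p p * dotE X X * hP4
      have hPeq : dotE p p = 4 - dotE q q := by linarith
      rw [hPeq] at master hkey hdqW hPpos
      have e1 : (4 - dotE q q) * (dotE q W)^2
          ≤ (4 - dotE q q) * (dotE q q * dotE W W) :=
        mul_le_mul_of_nonneg_left hCS hPpos.le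
      have e2 : ((4 - dotE q q) * dotE q q)
            * (dotE q q * dotE X X + (4 - dotE q q) * dotE b b)
          ≤ ((4 - dotE q q) * dotE q q)
            * (((4 - dotE q q) * dotE q q/2) * msqE B + (dotE X q)^2) :=
        mul_le_mul_of_nonneg_left hkey (mul_pos hPpos hQpos).le
      have e3 : dotE q q * (4 * (4 - dotE q q)^2 * TM)
          = dotE q q * ((4 - dotE q q) * dotE W W + (dotE q W - 2*dotE X q)^2
            + (4 - dotE q q) * (((4 - dotE q q) * dotE q q/2) * msqE B
                - dotE q q * dotE X X - (4 - dotE q q) * dotE b b)) := by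
        rw [master]
      have hsq := sq_nonneg (2*dotE q W - dotE q q * dotE X q)
      have hpos : 0 < dotE q q * (4 - dotE q q)^2 :=
        mul_pos hQpos (pow_pos hPpos 2)
      by_contra hcon
      push_neg at hcon
      have t1 : 0 < (4 - dotE q q)^2 := pow_pos hPpos 2
      have t2 : 4 * (4 - dotE q q)^2 * TM < 0 := by nlinarith [t1, hcon]
      have hneg := mul_neg_of_pos_of_neg hQpos t2
      linarith [e1, e2, e3, hsq, hneg]

set_option maxHeartbeats 1000000 in
lemma proca_core (aa u v : Fin m → ℝ) (A0 : ℝ)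
    (hu : dotE u u = 1) (hv : dotE v v = 1) :
    0 ≤ (A0 + dotE aa u) * (A0 + dotE aa v)
        - (1/2)*(-1 + dotE u v)*(-(A0^2) + dotE aa aa) := by
  set TP := (A0 + dotE aa u) * (A0 + dotE aa v)
      - (1/2)*(-1 + dotE u v)*(-(A0^2) + dotE aa aa) with hTPdef
  set p : Fin m → ℝ := fun i => u i + v i with hp
  set q : Fin m → ℝ := fun i => u i - v i with hq
  have hpp : dotE p p = dotE u u + 2*dotE u v + dotE v v := by rw [hp]; exact dotE_add_add u v
  have hqq : dotE q q = dotE u u - 2*dotE u v + dotE v v := by rw [hq]; exact dotE_sub_sub u v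
  have hpa : dotE p aa = dotE u aa + dotE v aa := by rw [hp]; exact dotE_add_left u v aa
  have hqa : dotE q aa = dotE u aa - dotE v aa := by rw [hq]; exact dotE_sub_left u v aa
  have hc1 : dotE aa u = dotE u aa := dotE_comm _ _
  have hc2 : dotE aa v = dotE v aa := dotE_comm _ _
  have hpq0 : dotE p q = 0 := by
    rw [hp, hq, dotE_add_left, dotE_sub_right, dotE_sub_right, dotE_comm v u, hu, hv]
    ring
  have hTP : 4 * TP = dotE p p * A0^2 + 4*A0*dotE p aa + (dotE p aa)^2
      - (dotE q aa)^2 + dotE q q * dotE aa aa := by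
    rw [hTPdef, hpp, hqq, hpa, hqa, hc1, hc2, hu, hv]
    ring
  have hP4 : dotE p p + dotE q q = 4 := by rw [hpp, hqq, hu, hv]; ring
  have hPnn := dotE_self_nonneg p
  have hQnn := dotE_self_nonneg q
  clear_value TP p q
  rcases eq_or_lt_of_le hPnn with hP0 | hPpos
  · have hpz : ∀ i, p i = 0 := dotE_self_eq_zero hP0.symm
    have hpa0 : dotE p aa = 0 := dotE_zero_left hpz aa
    have hQ4 : dotE q q = 4 := by linarith
    rw [← hP0, hpa0, hQ4] at hTP
    have hcs := dotE_CS q aa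
    rw [hQ4] at hcs
    nlinarith [hTP, hcs]
  · -- P > 0
    have hbr : 0 ≤ dotE p p * dotE q q * dotE aa aa
        - dotE q q * (dotE p aa)^2 - dotE p p * (dotE q aa)^2 := by
      rcases eq_or_lt_of_le hQnn with hQ0 | hQpos
      · have hqz : ∀ i, q i = 0 := dotE_self_eq_zero hQ0.symm
        have hqa0 : dotE q aa = 0 := dotE_zero_left hqz aa
        rw [hqa0, ← hQ0]
        norm_num
      · set Z : Fin m → ℝ := fun i => (dotE p p * dotE q q) * aa i
            + (-(dotE q q * dotE p aa)) * p i + (-(dotE p p * dotE q aa)) * q i with hZ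
        have hZZ : dotE Z Z = dotE p p * dotE q q *
            (dotE p p * dotE q q * dotE aa aa - dotE q q * (dotE p aa)^2
              - dotE p p * (dotE q aa)^2) := by
          rw [hZ, dotE_comb3 (dotE p p * dotE q q) (-(dotE q q * dotE p aa))
              (-(dotE p p * dotE q aa)) aa p q, dotE_comm aa p, dotE_comm aa q, hpq0]
          ring
        have hZnn := dotE_self_nonneg Z
        rw [hZZ] at hZnn
        have hPQ := mul_pos hPpos hQpos
        nlinarith [hZnn, hPQ]
    have hPeq : dotE p p = 4 - dotE q q := by linarith
    rw [hPeq] at hTP hbr hPpos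
    nlinarith [hTP, hbr, hPpos, sq_nonneg ((4 - dotE q q) * A0 + 2 * dotE p aa)]

lemma sum_pull_mul {ι : Type*} [Fintype ι] (c : ℝ) (f : ι → ℝ) :
    ∑ i, c * f i = c * ∑ i, f i := by rw [Finset.mul_sum]

lemma term1_split {ν μ : ℕ} (t w f g : Fin ν → ℝ) (S T : Fin ν → Fin μ → ℝ) :
    (∑ a, ∑ b, (t a * w b) * (-(f a * g b) + ∑ i, S a i * T b i))
      = -((∑ a, t a * f a) * (∑ b, w b * g b))
        + ∑ i, (∑ a, t a * S a i) * (∑ b, w b * T b i) := by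
  have h : ∀ a b, (t a * w b) * (-(f a * g b) + ∑ i, S a i * T b i)
      = -((t a * f a) * (w b * g b)) + ∑ i, (t a * S a i) * (w b * T b i) := by
    intro a b
    rw [mul_add, Finset.mul_sum]
    congr 1
    · ring
    · exact Finset.sum_congr rfl fun i _ => by ring
  simp only [h, Finset.sum_add_distrib]
  congr 1
  · have h1 : ∀ (a : Fin ν) (b : Fin ν), -((t a * f a) * (w b * g b))
        = (-(t a * f a)) * (w b * g b) := by intros; ring
    simp only [h1, ← Finset.mul_sum]
    rw [← Finset.sum_mul, Finset.sum_neg_distrib, neg_mul]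
  · have h2 : ∀ a : Fin ν, (∑ b, ∑ i, (t a * S a i) * (w b * T b i))
        = ∑ i, (t a * S a i) * (∑ b, w b * T b i) := by
      intro a
      rw [Finset.sum_comm]
      exact Finset.sum_congr rfl fun i _ => by rw [← Finset.mul_sum]
    simp only [h2]
    rw [Finset.sum_comm]
    refine Finset.sum_congr rfl fun i _ => ?_
    rw [← Finset.sum_mul]

lemma etaPair {m : ℕ} (g h : Fin (m+1) → ℝ) :
    (∑ c, ∑ d, g c * etaMat (m+1) c d * h d)
      = -(g 0 * h 0) + ∑ i : Fin m, g i.succ * h i.succ := by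
  have hinner : ∀ c : Fin (m+1), (∑ d, g c * etaMat (m+1) c d * h d)
      = g c * (if (c : ℕ) = 0 then (-1:ℝ) else 1) * h c := by
    intro c
    rw [Finset.sum_eq_single c]
    · simp [etaMat]
    · intro d _ hdc
      simp [etaMat, Ne.symm hdc]
    · intro hc
      exact absurd (Finset.mem_univ c) hc
  simp only [hinner]
  rw [Fin.sum_univ_succ]
  simp [Fin.val_succ]

lemma mink_succ {m : ℕ} (x y : Fin (m+1) → ℝ) :
    minkowski x y = -(x 0 * y 0)
      + dotE (fun i => x (Fin.succ i)) (fun i => y (Fin.succ i)) := by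
  unfold minkowski dotE
  rw [Fin.sum_univ_succ]
  simp [Fin.val_succ]

lemma cons_row {m : ℕ} (u : Fin m → ℝ) (G : Fin (m+1) → ℝ) :
    (∑ x, (Fin.cons 1 u : Fin (m+1) → ℝ) x * G x) = G 0 + ∑ i, u i * G i.succ := by
  rw [Fin.sum_univ_succ]
  simp

lemma cons_row' {m : ℕ} (u : Fin m → ℝ) (G : Fin (m+1) → ℝ) :
    (∑ x, G x * (Fin.cons 1 u : Fin (m+1) → ℝ) x) = G 0 + ∑ i, G i.succ * u i := by
  rw [Fin.sum_univ_succ]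
  simp

set_option maxHeartbeats 1000000 in
lemma proca_component {m : ℕ} (F : Matrix (Fin (m+1)) (Fin (m+1)) ℝ)
    (hF : ∀ a b, F a b = -F b a) (A : Fin (m+1) → ℝ) (mc : ℝ) (u w : Fin m → ℝ) :
    procaT F A mc (Fin.cons 1 u) (Fin.cons 1 w)
      = (dotE (fun i => F 0 i.succ) (fun i => F 0 i.succ)
         - dotE u (fun i => F 0 i.succ) * dotE w (fun i => F 0 i.succ)
         + dotE (fun i => F 0 i.succ) (actE (fun i j => F i.succ j.succ) w)
         + dotE (actE (fun i j => F i.succ j.succ) u) (fun i => F 0 i.succ)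
         + dotE (actE (fun i j => F i.succ j.succ) u) (actE (fun i j => F i.succ j.succ) w)
         - (1/4)*(-1 + dotE u w)*(msqE (fun i j => F i.succ j.succ)
              - 2*dotE (fun i => F 0 i.succ) (fun i => F 0 i.succ)))
        + mc^2 * ((A 0 + dotE (fun i => A i.succ) u)*(A 0 + dotE (fun i => A i.succ) w)
            - (1/2)*(-1 + dotE u w)*(-((A 0)^2)
                + dotE (fun i => A i.succ) (fun i => A i.succ))) := by
  have hF00 : F 0 0 = 0 := by have := hF 0 0; linarith
  have hFs : ∀ i : Fin m, F i.succ 0 = -F 0 i.succ := fun i => hF _ _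
  -- Minkowski pieces
  have hMink : minkowski (Fin.cons 1 u : Fin (m+1) → ℝ) (Fin.cons 1 w) = -1 + dotE u w := by
    rw [mink_succ]
    simp [dotE]
  have hMinkA : minkowski A A = -(A 0 * A 0)
      + dotE (fun i => A i.succ) (fun i => A i.succ) := mink_succ A A
  -- A-sums
  have hAt : (∑ x, A x * (Fin.cons 1 u : Fin (m+1) → ℝ) x)
      = A 0 + dotE (fun i => A i.succ) u := by
    rw [cons_row']; rfl
  have hAw : (∑ x, A x * (Fin.cons 1 w : Fin (m+1) → ℝ) x)
      = A 0 + dotE (fun i => A i.succ) w := by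
    rw [cons_row']; rfl
  -- FdotF
  have hin : ∀ c d : Fin (m+1), (∑ e, ∑ f, F c d * etaMat (m+1) c e * etaMat (m+1) d f * F e f)
      = ((if (c:ℕ) = 0 then (-1:ℝ) else 1) * (if (d:ℕ) = 0 then (-1:ℝ) else 1)) * (F c d)^2 := by
    intro c d
    rw [Finset.sum_eq_single c]
    · rw [Finset.sum_eq_single d]
      · simp [etaMat]; ring
      · intro f _ hfd; simp [etaMat, Ne.symm hfd]
      · intro hd; exact absurd (Finset.mem_univ d) hd
    · intro e _ hec
      refine Finset.sum_eq_zero fun f _ => ?_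
      simp [etaMat, Ne.symm hec]
    · intro hc; exact absurd (Finset.mem_univ c) hc
  have hFF : FdotF F = msqE (fun i j => F i.succ j.succ)
      - 2 * dotE (fun i => F 0 i.succ) (fun i => F 0 i.succ) := by
    unfold FdotF
    simp only [hin]
    rw [Fin.sum_univ_succ]
    have h1 : (∑ d : Fin (m+1), ((if ((0:Fin (m+1)):ℕ) = 0 then (-1:ℝ) else 1)
        * (if (d:ℕ) = 0 then (-1:ℝ) else 1)) * (F 0 d)^2)
        = (F 0 0)^2 - ∑ i : Fin m, (F 0 i.succ)^2 := by
      rw [Fin.sum_univ_succ]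
      simp [Fin.val_succ, Finset.sum_neg_distrib]
      ring
    rw [h1, hF00]
    have h2 : ∀ i : Fin m, (∑ d : Fin (m+1), ((if ((i.succ : Fin (m+1)):ℕ) = 0 then (-1:ℝ) else 1)
        * (if (d:ℕ) = 0 then (-1:ℝ) else 1)) * (F i.succ d)^2)
        = -((F 0 i.succ)^2) + ∑ j : Fin m, (F i.succ j.succ)^2 := by
      intro i
      rw [Fin.sum_univ_succ]
      simp [Fin.val_succ, hFs i, neg_sq]
    simp only [h2, Finset.sum_add_distrib]
    unfold msqE dotE
    have h3 : ∀ i : Fin m, F 0 i.succ * F 0 i.succ = (F 0 i.succ)^2 := fun i => (sq _).symm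
    simp only [h3, Finset.sum_neg_distrib]
    ring
  -- Term1
  have hA1 : ∀ a b : Fin (m+1), (∑ c, ∑ d, (Fin.cons 1 u : Fin (m+1) → ℝ) a
        * (Fin.cons 1 w : Fin (m+1) → ℝ) b * F a c * etaMat (m+1) c d * F b d)
      = ((Fin.cons 1 u : Fin (m+1) → ℝ) a * (Fin.cons 1 w : Fin (m+1) → ℝ) b)
        * (-(F a 0 * F b 0) + ∑ i : Fin m, F a i.succ * F b i.succ) := by
    intro a b
    rw [← etaPair (F a) (F b), Finset.mul_sum]
    refine Finset.sum_congr rfl fun c _ => ?_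
    rw [Finset.mul_sum]
    exact Finset.sum_congr rfl fun d _ => by ring
  have hT1 : (∑ a, ∑ b, ∑ c, ∑ d, (Fin.cons 1 u : Fin (m+1) → ℝ) a
        * (Fin.cons 1 w : Fin (m+1) → ℝ) b * F a c * etaMat (m+1) c d * F b d)
      = -((F 0 0 + ∑ i, u i * F i.succ 0) * (F 0 0 + ∑ i, w i * F i.succ 0))
        + ∑ i : Fin m, ((F 0 i.succ + ∑ a', u a' * F a'.succ i.succ)
            * (F 0 i.succ + ∑ b', w b' * F b'.succ i.succ)) := by
    simp only [hA1]
    rw [term1_split (Fin.cons 1 u) (Fin.cons 1 w) (fun a => F a 0) (fun b => F b 0)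
      (fun a i => F a i.succ) (fun b i => F b i.succ)]
    rw [cons_row u (fun x => F x 0), cons_row w (fun x => F x 0)]
    refine congrArg₂ _ rfl ?_
    refine Finset.sum_congr rfl fun i _ => ?_
    rw [cons_row u (fun x => F x i.succ), cons_row w (fun x => F x i.succ)]
  -- assemble
  unfold procaT
  rw [hT1, hMink, hMinkA, hAt, hAw, hFF, hF00]
  simp only [hFs]
  -- expand the spatial double products
  have hbig : ∀ i : Fin m, (F 0 i.succ + ∑ a', u a' * F a'.succ i.succ)
        * (F 0 i.succ + ∑ b', w b' * F b'.succ i.succ)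
      = F 0 i.succ * F 0 i.succ
        + F 0 i.succ * (actE (fun i j => F i.succ j.succ) w i)
        + (actE (fun i j => F i.succ j.succ) u i) * F 0 i.succ
        + (actE (fun i j => F i.succ j.succ) u i) * (actE (fun i j => F i.succ j.succ) w i) := by
    intro i
    unfold actE
    ring
  simp only [hbig, Finset.sum_add_distrib]
  have hneg : ∀ i : Fin m, u i * -F 0 i.succ = -(u i * F 0 i.succ) := fun i => by ring
  have hneg2 : ∀ i : Fin m, w i * -F 0 i.succ = -(w i * F 0 i.succ) := fun i => by ring
  simp only [hneg, hneg2, Finset.sum_neg_distrib]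
  unfold dotE
  ring

lemma dotE_neg_neg (x : Fin m → ℝ) :
    dotE (fun i => -x i) (fun i => -x i) = dotE x x := by
  unfold dotE
  exact Finset.sum_congr rfl fun i _ => by ring

set_option maxHeartbeats 1000000 in
lemma procaT_comb {ν : ℕ} (F : Matrix (Fin ν) (Fin ν) ℝ) (A : Fin ν → ℝ) (mc : ℝ)
    (c₁ c₂ d₁ d₂ : ℝ) (x₁ x₂ y₁ y₂ : Fin ν → ℝ) :
    procaT F A mc (fun i => c₁ * x₁ i + c₂ * x₂ i) (fun i => d₁ * y₁ i + d₂ * y₂ i)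
      = c₁*d₁ * procaT F A mc x₁ y₁ + c₁*d₂ * procaT F A mc x₁ y₂
        + c₂*d₁ * procaT F A mc x₂ y₁ + c₂*d₂ * procaT F A mc x₂ y₂ := by
  have hm : ∀ w₁ w₂ : Fin ν → ℝ,
      minkowski (fun i => c₁ * x₁ i + c₂ * x₂ i) (fun i => d₁ * w₁ i + d₂ * w₂ i)
      = c₁*d₁*minkowski x₁ w₁ + c₁*d₂*minkowski x₁ w₂
        + c₂*d₁*minkowski x₂ w₁ + c₂*d₂*minkowski x₂ w₂ := by
    intro w₁ w₂
    unfold minkowski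
    have h : ∀ i : Fin ν,
        (if (i:ℕ) = 0 then (-1:ℝ) else 1) * (c₁ * x₁ i + c₂ * x₂ i) * (d₁ * w₁ i + d₂ * w₂ i)
        = c₁*d₁*((if (i:ℕ) = 0 then (-1:ℝ) else 1) * x₁ i * w₁ i)
          + c₁*d₂*((if (i:ℕ) = 0 then (-1:ℝ) else 1) * x₁ i * w₂ i)
          + c₂*d₁*((if (i:ℕ) = 0 then (-1:ℝ) else 1) * x₂ i * w₁ i)
          + c₂*d₂*((if (i:ℕ) = 0 then (-1:ℝ) else 1) * x₂ i * w₂ i) := by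
      intro i; ring
    simp only [h, Finset.sum_add_distrib, ← Finset.mul_sum]
  have hA : ∀ (z₁ z₂ : Fin ν → ℝ) (e₁ e₂ : ℝ),
      (∑ a, A a * (e₁ * z₁ a + e₂ * z₂ a))
        = e₁ * (∑ a, A a * z₁ a) + e₂ * (∑ a, A a * z₂ a) := by
    intro z₁ z₂ e₁ e₂
    have h : ∀ a : Fin ν, A a * (e₁ * z₁ a + e₂ * z₂ a)
        = e₁ * (A a * z₁ a) + e₂ * (A a * z₂ a) := by intro a; ring
    simp only [h, Finset.sum_add_distrib, ← Finset.mul_sum]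
  have hq : (∑ a, ∑ b, ∑ c, ∑ d, (c₁ * x₁ a + c₂ * x₂ a) * (d₁ * y₁ b + d₂ * y₂ b)
        * F a c * etaMat ν c d * F b d)
      = c₁*d₁ * (∑ a, ∑ b, ∑ c, ∑ d, x₁ a * y₁ b * F a c * etaMat ν c d * F b d)
        + c₁*d₂ * (∑ a, ∑ b, ∑ c, ∑ d, x₁ a * y₂ b * F a c * etaMat ν c d * F b d)
        + c₂*d₁ * (∑ a, ∑ b, ∑ c, ∑ d, x₂ a * y₁ b * F a c * etaMat ν c d * F b d)
        + c₂*d₂ * (∑ a, ∑ b, ∑ c, ∑ d, x₂ a * y₂ b * F a c * etaMat ν c d * F b d) := by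
    have h : ∀ a b c d : Fin ν, (c₁ * x₁ a + c₂ * x₂ a) * (d₁ * y₁ b + d₂ * y₂ b)
          * F a c * etaMat ν c d * F b d
        = c₁*d₁ * (x₁ a * y₁ b * F a c * etaMat ν c d * F b d)
          + c₁*d₂ * (x₁ a * y₂ b * F a c * etaMat ν c d * F b d)
          + c₂*d₁ * (x₂ a * y₁ b * F a c * etaMat ν c d * F b d)
          + c₂*d₂ * (x₂ a * y₂ b * F a c * etaMat ν c d * F b d) := by
      intros; ring
    simp only [h, Finset.sum_add_distrib, ← Finset.mul_sum]
  simp only [procaT]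
  rw [hq, hm, hA, hA]
  ring

lemma decompose {m : ℕ} (T : Fin (m+1) → ℝ) :
    ∃ u : Fin (m+1) → ℝ, dotE u u = 1 ∧ ∀ i, T i = Real.sqrt (dotE T T) * u i := by
  rcases eq_or_lt_of_le (dotE_self_nonneg T) with h0 | hpos
  · refine ⟨fun i => if i = 0 then 1 else 0, ?_, ?_⟩
    · unfold dotE
      have h : ∀ i : Fin (m+1), ((if i = 0 then (1:ℝ) else 0) * (if i = 0 then 1 else 0))
          = if i = 0 then 1 else 0 := by
        intro i; by_cases h : i = 0 <;> simp [h]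
      rw [Finset.sum_congr rfl fun i _ => h i]
      simp
    · intro i
      rw [dotE_self_eq_zero h0.symm i, ← h0]
      simp
  · have hrpos : 0 < Real.sqrt (dotE T T) := Real.sqrt_pos.mpr hpos
    have hr2 : Real.sqrt (dotE T T) ^ 2 = dotE T T := Real.sq_sqrt hpos.le
    have hne : Real.sqrt (dotE T T) ≠ 0 := ne_of_gt hrpos
    refine ⟨fun i => T i / Real.sqrt (dotE T T), ?_, ?_⟩
    · have hcal : ∀ i : Fin (m+1), T i / Real.sqrt (dotE T T) * (T i / Real.sqrt (dotE T T))
          = (dotE T T)⁻¹ * (T i * T i) := by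
        intro i; rw [← hr2]; field_simp
        rw [Real.sqrt_sq hrpos.le]
      calc dotE (fun i => T i / Real.sqrt (dotE T T)) (fun i => T i / Real.sqrt (dotE T T))
          = ∑ i : Fin (m+1), (dotE T T)⁻¹ * (T i * T i) :=
            Finset.sum_congr rfl fun i _ => hcal i
        _ = (dotE T T)⁻¹ * dotE T T := by rw [← Finset.mul_sum]; rfl
        _ = 1 := inv_mul_cancel₀ (ne_of_gt hpos)
    · intro i
      rw [mul_comm, div_mul_cancel₀ _ hne]

set_option maxHeartbeats 1000000 in
lemma null_core {m : ℕ} (F : Matrix (Fin (m+1)) (Fin (m+1)) ℝ)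
    (hF : ∀ a b, F a b = -F b a) (A : Fin (m+1) → ℝ) (mc : ℝ)
    (u w : Fin m → ℝ) (hu : dotE u u = 1) (hw : dotE w w = 1) :
    0 ≤ procaT F A mc (Fin.cons 1 u) (Fin.cons 1 w) := by
  rw [proca_component F hF A mc u w]
  have hB : ∀ i j : Fin m, F i.succ j.succ = -(F j.succ i.succ) := fun i j => hF _ _
  exact add_nonneg (maxwell_core (B := fun i j => F i.succ j.succ) hB _ u w hu hw)
    (mul_nonneg (sq_nonneg mc) (proca_core _ u w (A 0) hu hw))

end MPdec


set_option maxHeartbeats 2000000 in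
/-- The Maxwell/Proca field satisfies the dominant energy condition pointwise,
off-shell: `T(t,ξ) ≥ 0` for all co-oriented timelike vectors `t, ξ`. -/
theorem maxwell_proca_dec
    (n : ℕ) (hn : 1 ≤ n) (F : Matrix (Fin n) (Fin n) ℝ)
    (hF : ∀ a b : Fin n, F a b = -F b a)
    (A : Fin n → ℝ) (m : ℝ) :
    ∀ t ξ : Fin n → ℝ, minkowski t t < 0 → minkowski ξ ξ < 0 →
      minkowski t ξ < 0 → 0 ≤ procaT F A m t ξ := by
  intro t ξ htt hξξ htξ
  obtain ⟨μ, rfl⟩ : ∃ μ, n = μ + 1 := ⟨n - 1, (Nat.succ_pred_eq_of_pos hn).symm⟩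
  rw [MPdec.mink_succ] at htt hξξ htξ
  have hF00 : F 0 0 = 0 := by have := hF 0 0; linarith
  cases μ with
  | zero =>
    simp only [MPdec.dotE, Finset.univ_eq_empty, Finset.sum_empty, add_zero] at htt hξξ htξ
    simp only [procaT, minkowski, FdotF, etaMat, MPdec.dotE, Fin.sum_univ_one, hF00]
    simp
    have h1 : t 0 * ξ 0 * F 0 0 * F 0 0 = 0 := by rw [hF00]; ring
    have h2 : (4:ℝ)⁻¹ * (t 0 * ξ 0) * (F 0 0 * F 0 0) = 0 := by rw [hF00]; ring
    nlinarith [h1, h2, mul_nonneg (sq_nonneg (m * A 0)) (neg_pos.mpr htξ).le]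
  | succ ν =>
    set T : Fin (ν+1) → ℝ := fun i => t (Fin.succ i) with hTd
    set Ξ : Fin (ν+1) → ℝ := fun i => ξ (Fin.succ i) with hΞd
    set r := Real.sqrt (MPdec.dotE T T) with hrd
    set s := Real.sqrt (MPdec.dotE Ξ Ξ) with hsd
    obtain ⟨u, hu, hTu⟩ := MPdec.decompose T
    obtain ⟨v, hv, hΞv⟩ := MPdec.decompose Ξ
    rw [← hrd] at hTu
    rw [← hsd] at hΞv
    have hr2 : r^2 = MPdec.dotE T T := by rw [hrd]; exact Real.sq_sqrt (MPdec.dotE_self_nonneg T)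
    have hs2 : s^2 = MPdec.dotE Ξ Ξ := by rw [hsd]; exact Real.sq_sqrt (MPdec.dotE_self_nonneg Ξ)
    have hrnn : 0 ≤ r := by rw [hrd]; exact Real.sqrt_nonneg _
    have hsnn : 0 ≤ s := by rw [hsd]; exact Real.sqrt_nonneg _
    have hCS := MPdec.dotE_CS T Ξ
    have hXnn := MPdec.dotE_self_nonneg T
    have hYnn := MPdec.dotE_self_nonneg Ξ
    have hsign : 0 < t 0 * ξ 0 := by
      nlinarith [hCS, htt, hξξ, htξ, hXnn, hYnn, sq_nonneg (t 0 * ξ 0 - MPdec.dotE T Ξ)]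
    set c₁ := (t 0 + r)/2 with hc₁
    set c₂ := (t 0 - r)/2 with hc₂
    set d₁ := (ξ 0 + s)/2 with hd₁
    set d₂ := (ξ 0 - s)/2 with hd₂
    have hrlt : r^2 < (t 0)^2 := by rw [hr2]; nlinarith [htt]
    have hslt : s^2 < (ξ 0)^2 := by rw [hs2]; nlinarith [hξξ]
    have hprods : 0 ≤ c₁*d₁ ∧ 0 ≤ c₁*d₂ ∧ 0 ≤ c₂*d₁ ∧ 0 ≤ c₂*d₂ := by
      rcases lt_trichotomy (t 0) 0 with ht0 | ht0 | ht0
      · have hξ0 : ξ 0 < 0 := by nlinarith [hsign]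
        have h1 : t 0 + r < 0 := by nlinarith [hrlt, hrnn]
        have h2 : t 0 - r < 0 := by nlinarith [hrlt, hrnn]
        have h3 : ξ 0 + s < 0 := by nlinarith [hslt, hsnn]
        have h4 : ξ 0 - s < 0 := by nlinarith [hslt, hsnn]
        rw [hc₁, hc₂, hd₁, hd₂]
        refine ⟨by nlinarith, by nlinarith, by nlinarith, by nlinarith⟩
      · exfalso; rw [ht0] at hsign; simp at hsign
      · have hξ0 : 0 < ξ 0 := by nlinarith [hsign]
        have h1 : 0 < t 0 + r := by nlinarith [hrlt, hrnn]
        have h2 : 0 < t 0 - r := by nlinarith [hrlt, hrnn]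
        have h3 : 0 < ξ 0 + s := by nlinarith [hslt, hsnn]
        have h4 : 0 < ξ 0 - s := by nlinarith [hslt, hsnn]
        rw [hc₁, hc₂, hd₁, hd₂]
        refine ⟨by nlinarith, by nlinarith, by nlinarith, by nlinarith⟩
    have hdect : t = fun x => c₁ * (Fin.cons 1 u : Fin (ν+2) → ℝ) x
        + c₂ * (Fin.cons 1 (fun i => -u i) : Fin (ν+2) → ℝ) x := by
      funext x
      refine Fin.cases ?_ ?_ x
      · simp only [Fin.cons_zero]
        rw [hc₁, hc₂]; ring
      · intro i
        simp only [Fin.cons_succ]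
        have h := hTu i
        rw [hTd] at h
        simp only at h
        rw [h, hc₁, hc₂]; ring
    have hdecξ : ξ = fun x => d₁ * (Fin.cons 1 v : Fin (ν+2) → ℝ) x
        + d₂ * (Fin.cons 1 (fun i => -v i) : Fin (ν+2) → ℝ) x := by
      funext x
      refine Fin.cases ?_ ?_ x
      · simp only [Fin.cons_zero]
        rw [hd₁, hd₂]; ring
      · intro i
        simp only [Fin.cons_succ]
        have h := hΞv i
        rw [hΞd] at h
        simp only at h
        rw [h, hd₁, hd₂]; ring
    rw [hdect, hdecξ, MPdec.procaT_comb]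
    have hun : MPdec.dotE (fun i => -u i) (fun i => -u i) = 1 := by
      rw [MPdec.dotE_neg_neg]; exact hu
    have hvn : MPdec.dotE (fun i => -v i) (fun i => -v i) = 1 := by
      rw [MPdec.dotE_neg_neg]; exact hv
    obtain ⟨p11, p12, p21, p22⟩ := hprods
    refine add_nonneg (add_nonneg (add_nonneg ?_ ?_) ?_) ?_
    · exact mul_nonneg p11 (MPdec.null_core F hF A m u v hu hv)
    · exact mul_nonneg p12 (MPdec.null_core F hF A m u (fun i => -v i) hu hvn)
    · exact mul_nonneg p21 (MPdec.null_core F hF A m (fun i => -u i) v hun hv)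
    · exact mul_nonneg p22 (MPdec.null_core F hF A m (fun i => -u i) (fun i => -v i) hun hvn)
end

section
/- Let n ≥ 2 be an integer and θ₀ < 0 a real number, and set T = (n−1)/(−θ₀). There is no function θ : ℝ → ℝ that is differentiable at every point of the interval [0, T], satisfies θ(0) = θ₀, and satisfies the Raychaudhuri inequality θ'(τ) ≤ −θ(τ)²/(n−1) for all τ ∈ [0, T]. In other words, any solution of the Raychaudhuri inequality with negative initial expansion θ₀ must blow up to −∞ within proper time (n−1)/|θ₀|. -/
/-- Focusing lemma for the Raychaudhuri inequality. For `n ≥ 2` and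
`θ₀ < 0`, no function `θ` can be differentiable on all of `[0, (n−1)/(−θ₀)]`, start
at `θ₀`, and satisfy `θ' ≤ −θ²/(n−1)` there: the expansion blows up before that time. -/
theorem raychaudhuri_focusing
    (n : ℕ) (hn : 2 ≤ n) (θ₀ : ℝ) (hθ₀ : θ₀ < 0) :
    ¬ ∃ θ : ℝ → ℝ,
        (∀ τ ∈ Set.Icc (0 : ℝ) (((n : ℝ) - 1) / (-θ₀)), DifferentiableAt ℝ θ τ) ∧
        θ 0 = θ₀ ∧
        (∀ τ ∈ Set.Icc (0 : ℝ) (((n : ℝ) - 1) / (-θ₀)),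
          deriv θ τ ≤ -(θ τ)^2 / ((n : ℝ) - 1)) := by
  rintro ⟨θ, hdiff, h0, hineq⟩
  set T : ℝ := ((n : ℝ) - 1) / (-θ₀) with hT
  have hn2 : (2 : ℝ) ≤ (n : ℝ) := by exact_mod_cast hn
  have hn1 : (0 : ℝ) < (n : ℝ) - 1 := by linarith
  have hθ₀' : (0 : ℝ) < -θ₀ := by linarith
  have hTpos : 0 < T := div_pos hn1 hθ₀'
  have hconv : Convex ℝ (Set.Icc (0 : ℝ) T) := convex_Icc 0 T
  have hint : interior (Set.Icc (0 : ℝ) T) ⊆ Set.Icc (0 : ℝ) T := interior_subset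
  have hcont : ContinuousOn θ (Set.Icc (0 : ℝ) T) := fun x hx =>
    (hdiff x hx).continuousAt.continuousWithinAt
  -- θ is antitone on [0, T]
  have hanti : AntitoneOn θ (Set.Icc (0 : ℝ) T) := by
    apply antitoneOn_of_deriv_nonpos hconv hcont
    · exact fun x hx => (hdiff x (hint hx)).differentiableWithinAt
    · intro x hx
      have h1 := hineq x (hint hx)
      have h2 : -(θ x) ^ 2 / ((n : ℝ) - 1) ≤ 0 :=
        div_nonpos_of_nonpos_of_nonneg (neg_nonpos.mpr (sq_nonneg _)) hn1.le
      linarith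
  -- θ stays below θ₀ < 0
  have hneg : ∀ τ ∈ Set.Icc (0 : ℝ) T, θ τ < 0 := by
    intro τ hτ
    have : θ τ ≤ θ 0 := hanti (Set.left_mem_Icc.mpr hTpos.le) hτ hτ.1
    rw [h0] at this; linarith
  -- the auxiliary function g
  set g : ℝ → ℝ := fun τ => -(θ τ)⁻¹ + τ / ((n : ℝ) - 1) with hg
  have hgderiv : ∀ τ ∈ Set.Icc (0 : ℝ) T,
      HasDerivAt g (deriv θ τ / (θ τ) ^ 2 + 1 / ((n : ℝ) - 1)) τ := by
    intro τ hτ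
    have hθτ : θ τ ≠ 0 := (hneg τ hτ).ne
    have h1 : HasDerivAt (fun x => (θ x)⁻¹) (-(deriv θ τ) / (θ τ) ^ 2) τ :=
      (hdiff τ hτ).hasDerivAt.inv hθτ
    have h2 : HasDerivAt (fun x : ℝ => x / ((n : ℝ) - 1)) (1 / ((n : ℝ) - 1)) τ :=
      (hasDerivAt_id τ).div_const _
    have := h1.neg.add h2
    exact this.congr_deriv (by ring)
  have hgcont : ContinuousOn g (Set.Icc (0 : ℝ) T) := fun x hx =>
    (hgderiv x hx).continuousAt.continuousWithinAt
  have hganti : AntitoneOn g (Set.Icc (0 : ℝ) T) := by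
    apply antitoneOn_of_deriv_nonpos hconv hgcont
    · exact fun x hx => (hgderiv x (hint hx)).differentiableAt.differentiableWithinAt
    · intro x hx
      have hxI := hint hx
      rw [(hgderiv x hxI).deriv]
      have hsq : (0 : ℝ) < (θ x) ^ 2 := by nlinarith [hneg x hxI]
      have h1 := hineq x hxI
      have h2 : deriv θ x / (θ x) ^ 2 ≤ (-(θ x) ^ 2 / ((n : ℝ) - 1)) / (θ x) ^ 2 :=
        div_le_div_of_nonneg_right h1 hsq.le
      have h3 : (-(θ x) ^ 2 / ((n : ℝ) - 1)) / (θ x) ^ 2 = -(1 / ((n : ℝ) - 1)) := by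
        field_simp; simp [(hneg x hxI).ne]
      rw [h3] at h2; linarith
  have hkey : g T ≤ g 0 :=
    hganti (Set.left_mem_Icc.mpr hTpos.le) (Set.right_mem_Icc.mpr hTpos.le) hTpos.le
  have hθT : θ T < 0 := hneg T (Set.right_mem_Icc.mpr hTpos.le)
  have hg0 : g 0 = -θ₀⁻¹ := by simp [hg, h0]
  have hTval : T / ((n : ℝ) - 1) = (-θ₀)⁻¹ := by
    rw [hT, div_div, mul_comm, ← div_div, div_self hn1.ne', one_div]
  have hgT : g T = -(θ T)⁻¹ + (-θ₀)⁻¹ := by rw [hg]; simp only; rw [hTval]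
  rw [hg0, hgT] at hkey
  have h4 : -θ₀⁻¹ = (-θ₀)⁻¹ := by rw [inv_neg]
  have h5 : -(θ T)⁻¹ ≤ 0 := by linarith [h4 ▸ hkey]
  have h6 : (θ T)⁻¹ < 0 := inv_neg''.mpr hθT
  linarith
end

section
/- Let Λ > 0 and set H = √(Λ/3). Let θ : ℝ → ℝ be differentiable on [0, ∞) and suppose that for all τ ≥ 0 one has θ'(τ) ≤ Λ − θ(τ)²/3 and θ(τ) ≥ √(3Λ). Then for all τ ≥ 0, θ(τ) ≤ √(3Λ) + (θ(0) − √(3Λ))·exp(−2Hτ). In particular, θ converges exponentially (at rate 2H) to the constant de Sitter value √(3Λ). -/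
/-- Exponential approach to the de Sitter expansion rate in Wald's cosmic
no-hair theorem. If `θ' ≤ Λ − θ²/3` and `θ ≥ √(3Λ)` on `[0,∞)`, then
`θ(τ) ≤ √(3Λ) + (θ(0) − √(3Λ)) exp(−2Hτ)` with `H = √(Λ/3)`. -/
theorem cosmic_no_hair_exponential_decay
    (Λ : ℝ) (hΛ : 0 < Λ) (H : ℝ) (hH : H = Real.sqrt (Λ / 3))
    (θ : ℝ → ℝ)
    (hdiff : ∀ τ ∈ Set.Ici (0 : ℝ), DifferentiableAt ℝ θ τ)
    (hray : ∀ τ ∈ Set.Ici (0 : ℝ), deriv θ τ ≤ Λ - (θ τ)^2 / 3)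
    (hlow : ∀ τ ∈ Set.Ici (0 : ℝ), Real.sqrt (3 * Λ) ≤ θ τ) :
    ∀ τ ∈ Set.Ici (0 : ℝ),
      θ τ ≤ Real.sqrt (3 * Λ) + (θ 0 - Real.sqrt (3 * Λ)) * Real.exp (-2 * H * τ) := by
  intro τ hτ
  set s := Real.sqrt (3 * Λ) with hs
  have hHpos : 0 < H := by rw [hH]; positivity
  have hs3 : s = 3 * H := by
    rw [hH, hs, show (3:ℝ) * Λ = 3^2 * (Λ / 3) by ring,
      Real.sqrt_mul (by positivity), Real.sqrt_sq (by norm_num)]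
  have hΛH : Λ = 3 * H^2 := by
    have : H^2 = Λ / 3 := by rw [hH]; exact Real.sq_sqrt (by positivity)
    linarith
  set g : ℝ → ℝ := fun t => (θ t - s) * Real.exp (2 * H * t) with hg
  have hgd : ∀ t ∈ Set.Ici (0:ℝ),
      HasDerivAt g ((deriv θ t + (θ t - s) * (2 * H)) * Real.exp (2 * H * t)) t := by
    intro t ht
    have h1 : HasDerivAt (fun u => θ u - s) (deriv θ t) t :=
      (hdiff t ht).hasDerivAt.sub_const s
    have h2 : HasDerivAt (fun u => Real.exp (2 * H * u)) (Real.exp (2 * H * t) * (2 * H)) t := by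
      have hinner : HasDerivAt (fun u : ℝ => 2 * H * u) (2 * H) t := by
        simpa using (hasDerivAt_id t).const_mul (2 * H)
      exact HasDerivAt.comp t (Real.hasDerivAt_exp (2 * H * t)) hinner
    have := h1.mul h2
    refine this.congr_deriv ?_
    ring
  have hganti : AntitoneOn g (Set.Ici 0) := by
    apply antitoneOn_of_deriv_nonpos (convex_Ici 0)
    · exact fun t ht => (hgd t ht).continuousAt.continuousWithinAt
    · intro t ht
      rw [interior_Ici] at ht
      exact (hgd t (Set.Ioi_subset_Ici_self ht)).differentiableAt.differentiableWithinAt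
    · intro t ht
      rw [interior_Ici] at ht
      rw [(hgd t (Set.Ioi_subset_Ici_self ht)).deriv]
      have hθs := hlow t (Set.Ioi_subset_Ici_self ht)
      have hr := hray t (Set.Ioi_subset_Ici_self ht)
      have key : deriv θ t + (θ t - s) * (2 * H) ≤ 0 := by
        nlinarith [sq_nonneg (θ t - 3 * H)]
      have := (Real.exp_pos (2 * H * t)).le
      nlinarith
  have hg0 : g τ ≤ g 0 := hganti Set.self_mem_Ici hτ hτ
  have hE : Real.exp (-2 * H * τ) * Real.exp (2 * H * τ) = 1 := by
    rw [← Real.exp_add, show -2 * H * τ + 2 * H * τ = 0 by ring, Real.exp_zero]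
  have hEpos := Real.exp_pos (-2 * H * τ)
  have hg0' : (θ τ - s) * Real.exp (2 * H * τ) ≤ (θ 0 - s) * 1 := by
    simpa [hg] using hg0
  have hfin : θ τ - s ≤ (θ 0 - s) * Real.exp (-2 * H * τ) := by
    have h := mul_le_mul_of_nonneg_right hg0' hEpos.le
    calc θ τ - s = ((θ τ - s) * Real.exp (2 * H * τ)) * Real.exp (-2 * H * τ) := by
          rw [mul_assoc, mul_comm (Real.exp (2 * H * τ)), hE, mul_one]
      _ ≤ ((θ 0 - s) * 1) * Real.exp (-2 * H * τ) := h
      _ = (θ 0 - s) * Real.exp (-2 * H * τ) := by ring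
  linarith
end

section
/- Let ξ ∈ [0, 1/2], let φ : ℝ → ℝ be twice continuously differentiable with 8πξφ(λ)² < 1 for all λ ∈ ℝ, and set w(λ) = (1 − 8πξφ(λ)²)⁻¹. Then for every continuously differentiable, compactly supported f : ℝ → ℝ, ∫_ℝ f(λ)² w(λ) ((1−2ξ) φ'(λ)² − 2ξ φ(λ) φ''(λ)) dλ ≥ −2ξ ∫_ℝ w(λ) φ(λ)² f'(λ)² dλ. -/
open MeasureTheory

/-- Weighted averaged null energy bound for the classical non-minimally
coupled scalar field restricted to a null geodesic. For `ξ ∈ [0, 1/2]`, a `C²` field `φ`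
with sub-Planckian values `8πξφ² < 1` and weight `w = (1 − 8πξφ²)⁻¹`, every `C¹`
compactly supported `f` satisfies
`∫ f² w ((1−2ξ)(φ')² − 2ξ φ φ'') ≥ −2ξ ∫ w φ² (f')²`. -/
theorem nonminimal_scalar_averaged_null_energy_bound
    (ξ : ℝ) (hξ : ξ ∈ Set.Icc (0 : ℝ) (1/2))
    (φ : ℝ → ℝ) (hφ : ContDiff ℝ 2 φ)
    (hsub : ∀ l : ℝ, 8 * Real.pi * ξ * (φ l)^2 < 1)
    (w : ℝ → ℝ) (hw : ∀ l : ℝ, w l = (1 - 8 * Real.pi * ξ * (φ l)^2)⁻¹) :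
    ∀ f : ℝ → ℝ, ContDiff ℝ 1 f → HasCompactSupport f →
      -(2 * ξ) * ∫ l : ℝ, w l * (φ l)^2 * (deriv f l)^2
        ≤ ∫ l : ℝ, (f l)^2 * w l *
            ((1 - 2*ξ) * (deriv φ l)^2 - 2 * ξ * φ l * deriv (deriv φ) l) := by
  obtain ⟨hξ0, hξ2⟩ := hξ
  have hwfun : w = fun l => (1 - 8 * Real.pi * ξ * (φ l)^2)⁻¹ := funext hw
  subst hwfun
  intro f hf hfs
  set c : ℝ := 8 * Real.pi * ξ with hc
  have hc0 : 0 ≤ c := by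
    have := Real.pi_pos
    nlinarith
  have hd_pos : ∀ l, 0 < 1 - c * (φ l)^2 := fun l => by linarith [hsub l]
  -- differentiability facts
  have hφd : Differentiable ℝ φ := hφ.differentiable (by norm_num)
  have hφ1 : ContDiff ℝ 1 (deriv φ) := by
    have h2 : ContDiff ℝ ((1 : ℕ) + 1) φ := by exact_mod_cast hφ
    exact (contDiff_succ_iff_deriv.mp h2).2.2
  have hφ'd : Differentiable ℝ (deriv φ) := hφ1.differentiable one_ne_zero
  have hfd : Differentiable ℝ f := hf.differentiable one_ne_zero
  -- continuity facts
  have hWc : Continuous (fun l => (1 - c * (φ l)^2)⁻¹) :=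
    (continuous_const.sub (continuous_const.mul (hφ.continuous.pow 2))).inv₀
      fun l => (hd_pos l).ne'
  have hfc : Continuous f := hf.continuous
  have hf'c : Continuous (deriv f) := hf.continuous_deriv le_rfl
  have hφc : Continuous φ := hφ.continuous
  have hφ'c : Continuous (deriv φ) := hφ1.continuous
  have hφ''c : Continuous (deriv (deriv φ)) := hφ1.continuous_deriv le_rfl
  -- the boundary function G and its derivative Gd
  set W : ℝ → ℝ := fun l => (1 - c * (φ l)^2)⁻¹ with hW
  set G : ℝ → ℝ := fun l => 2*ξ*(f l)^2 * W l * φ l * deriv φ l with hG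
  set Gd : ℝ → ℝ := fun l =>
      2*ξ*(2*f l*deriv f l * W l * φ l * deriv φ l
        + 2*c*(f l)^2*(W l)^2*(φ l)^2*(deriv φ l)^2
        + (f l)^2*W l*(deriv φ l)^2
        + (f l)^2*W l*φ l*(deriv (deriv φ) l)) with hGd
  have hGderiv : ∀ l, HasDerivAt G (Gd l) l := by
    intro l
    have hF : HasDerivAt f (deriv f l) l := (hfd l).hasDerivAt
    have hP : HasDerivAt φ (deriv φ l) l := (hφd l).hasDerivAt
    have hP' : HasDerivAt (deriv φ) (deriv (deriv φ) l) l := (hφ'd l).hasDerivAt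
    have hD : HasDerivAt (fun l => 1 - c * (φ l)^2)
        (0 - c * ((2 : ℕ) * φ l ^ (2-1) * deriv φ l)) l :=
      (hasDerivAt_const l (1:ℝ)).sub ((hP.pow 2).const_mul c)
    have hWD : HasDerivAt W
        (-(0 - c * ((2 : ℕ) * φ l ^ (2-1) * deriv φ l)) / (1 - c * (φ l)^2)^2) l :=
      hD.inv (hd_pos l).ne'
    have h := ((((hF.pow 2).const_mul (2*ξ)).mul hWD).mul hP).mul hP'
    refine h.congr_deriv ?_
    simp only [hGd, hW, Pi.mul_apply, Pi.pow_apply]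
    field_simp
    ring
  -- compact supports
  have hsuppG : HasCompactSupport G := by
    apply hfs.mono
    intro x hx
    simp only [hG, Function.mem_support, ne_eq] at hx ⊢
    intro h
    apply hx
    simp [h]
  have hsuppGd : HasCompactSupport Gd := by
    apply hfs.mono
    intro x hx
    simp only [hGd, Function.mem_support, ne_eq] at hx ⊢
    intro h
    apply hx
    simp [h]
  have hsuppA : HasCompactSupport (fun l => (f l)^2 * W l *
      ((1 - 2*ξ) * (deriv φ l)^2 - 2 * ξ * φ l * deriv (deriv φ) l)) := by
    apply hfs.mono
    intro x hx
    simp only [Function.mem_support, ne_eq] at hx ⊢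
    intro h
    apply hx
    simp [h]
  have hsuppB : HasCompactSupport (fun l => W l * (φ l)^2 * (deriv f l)^2) := by
    apply hfs.deriv.mono
    intro x hx
    simp only [Function.mem_support, ne_eq] at hx ⊢
    intro h
    apply hx
    simp [h]
  -- integrability
  have hintA : Integrable (fun l => (f l)^2 * W l *
      ((1 - 2*ξ) * (deriv φ l)^2 - 2 * ξ * φ l * deriv (deriv φ) l)) volume := by
    apply Continuous.integrable_of_hasCompactSupport _ hsuppA
    fun_prop
  have hintB : Integrable (fun l => W l * (φ l)^2 * (deriv f l)^2) volume := by
    apply Continuous.integrable_of_hasCompactSupport _ hsuppB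
    fun_prop
  have hintG : Integrable G volume := by
    apply Continuous.integrable_of_hasCompactSupport _ hsuppG
    simp only [hG]
    fun_prop
  have hintGd : Integrable Gd volume := by
    apply Continuous.integrable_of_hasCompactSupport _ hsuppGd
    simp only [hGd]
    fun_prop
  have hGzero : ∫ l, Gd l = 0 :=
    integral_eq_zero_of_hasDerivAt_of_integrable hGderiv hintGd hintG
  -- pointwise positivity
  have hQkey : ∀ l, (f l)^2 * W l *
      ((1 - 2*ξ) * (deriv φ l)^2 - 2 * ξ * φ l * deriv (deriv φ) l)
      + 2*ξ*(W l * (φ l)^2 * (deriv f l)^2) + Gd l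
      = 2*ξ*W l*(f l*deriv φ l + deriv f l*φ l)^2
        + (1-2*ξ)*W l*(f l*deriv φ l)^2
        + 4*ξ*c*(W l)^2*(φ l)^2*(f l*deriv φ l)^2 := by
    intro l
    simp only [hGd]
    ring
  have hQnonneg : ∀ l, 0 ≤ (f l)^2 * W l *
      ((1 - 2*ξ) * (deriv φ l)^2 - 2 * ξ * φ l * deriv (deriv φ) l)
      + 2*ξ*(W l * (φ l)^2 * (deriv f l)^2) + Gd l := by
    intro l
    rw [hQkey l]
    have hW0 : 0 ≤ W l := by
      simp only [hW]
      exact inv_nonneg.2 (hd_pos l).le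
    have h1 : 0 ≤ 2*ξ*W l*(f l*deriv φ l + deriv f l*φ l)^2 :=
      mul_nonneg (mul_nonneg (by linarith) hW0) (sq_nonneg _)
    have h2 : 0 ≤ (1-2*ξ)*W l*(f l*deriv φ l)^2 :=
      mul_nonneg (mul_nonneg (by linarith) hW0) (sq_nonneg _)
    have h3 : 0 ≤ 4*ξ*c*(W l)^2*(φ l)^2*(f l*deriv φ l)^2 := by
      apply mul_nonneg (mul_nonneg (mul_nonneg (mul_nonneg (by linarith) hc0) (sq_nonneg _)) (sq_nonneg _)) (sq_nonneg _)
    linarith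
  -- put it together
  have h0 : 0 ≤ ∫ l, ((f l)^2 * W l *
      ((1 - 2*ξ) * (deriv φ l)^2 - 2 * ξ * φ l * deriv (deriv φ) l)
      + 2*ξ*(W l * (φ l)^2 * (deriv f l)^2) + Gd l) := integral_nonneg hQnonneg
  have hAB : Integrable (fun l => (f l)^2 * W l *
      ((1 - 2*ξ) * (deriv φ l)^2 - 2 * ξ * φ l * deriv (deriv φ) l)
      + 2*ξ*(W l * (φ l)^2 * (deriv f l)^2)) volume :=
    hintA.add (hintB.const_mul (2*ξ))
  have e1 : ∫ l, ((f l)^2 * W l *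
      ((1 - 2*ξ) * (deriv φ l)^2 - 2 * ξ * φ l * deriv (deriv φ) l)
      + 2*ξ*(W l * (φ l)^2 * (deriv f l)^2) + Gd l)
      = (∫ l, ((f l)^2 * W l *
          ((1 - 2*ξ) * (deriv φ l)^2 - 2 * ξ * φ l * deriv (deriv φ) l)
          + 2*ξ*(W l * (φ l)^2 * (deriv f l)^2))) + ∫ l, Gd l :=
    integral_add hAB hintGd
  have e2 : ∫ l, ((f l)^2 * W l *
      ((1 - 2*ξ) * (deriv φ l)^2 - 2 * ξ * φ l * deriv (deriv φ) l)
      + 2*ξ*(W l * (φ l)^2 * (deriv f l)^2))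
      = (∫ l, (f l)^2 * W l *
          ((1 - 2*ξ) * (deriv φ l)^2 - 2 * ξ * φ l * deriv (deriv φ) l))
        + ∫ l, 2*ξ*(W l * (φ l)^2 * (deriv f l)^2) :=
    integral_add hintA (hintB.const_mul (2*ξ))
  have e3 : ∫ l, 2*ξ*(W l * (φ l)^2 * (deriv f l)^2)
      = 2*ξ * ∫ l, W l * (φ l)^2 * (deriv f l)^2 :=
    integral_const_mul _ _
  rw [e1, e2, e3, hGzero, add_zero] at h0
  linarith
end

section
/- Let ρ : ℝ → ℝ be Lebesgue integrable, let f : ℝ → ℝ be continuous with compact support and f(0) ≠ 0, and let C ≥ 0. Suppose that for every t₀ > 0, ∫_ℝ ρ(t) f(t/t₀)² dt ≥ −C/t₀³. Then ∫_ℝ ρ(t) dt ≥ 0. -/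
open MeasureTheory Filter Topology

/-- The long-time scaling limit of a quantum energy inequality yields the
averaged weak energy condition. If `ρ` is integrable, `f` is continuous with compact
support and `f(0) ≠ 0`, and `∫ ρ(t) f(t/t₀)² dt ≥ −C/t₀³` for every `t₀ > 0` with
`C ≥ 0`, then `∫ ρ ≥ 0`. -/
theorem qei_scaling_limit_awec
    (ρ : ℝ → ℝ) (hρ : Integrable ρ)
    (f : ℝ → ℝ) (hf : Continuous f) (hfc : HasCompactSupport f) (hf0 : f 0 ≠ 0)
    (C : ℝ) (hC : 0 ≤ C)
    (hqei : ∀ t₀ : ℝ, 0 < t₀ → -(C / t₀^3) ≤ ∫ t : ℝ, ρ t * (f (t / t₀))^2) :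
    0 ≤ ∫ t : ℝ, ρ t := by
  obtain ⟨M, hM⟩ := hf.bounded_above_of_compact_support hfc
  -- limit of the scaled integrals
  have hnpos : ∀ n : ℕ, (0:ℝ) < n + 1 := fun n => by positivity
  have hlim : Tendsto (fun n : ℕ => ∫ t : ℝ, ρ t * (f (t / (n + 1)))^2) atTop
      (𝓝 (∫ t : ℝ, ρ t * (f 0)^2)) := by
    apply tendsto_integral_of_dominated_convergence (fun t => M^2 * |ρ t|)
    · intro n
      exact (hρ.aestronglyMeasurable.mul
        (((hf.comp (continuous_id.div_const _)).pow 2).aestronglyMeasurable))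
    · exact (hρ.abs.const_mul _)
    · intro n
      filter_upwards with t
      have h1 : ‖f (t / (n+1))‖ ≤ M := hM _
      have h2 : (0:ℝ) ≤ M := le_trans (norm_nonneg _) h1
      calc ‖ρ t * f (t / (n+1)) ^ 2‖ = |f (t / (n+1))|^2 * |ρ t| := by
            rw [norm_mul]; simp [abs_pow]; ring
        _ ≤ M^2 * |ρ t| := by
            apply mul_le_mul_of_nonneg_right _ (abs_nonneg _)
            exact pow_le_pow_left₀ (abs_nonneg _) h1 2
    · filter_upwards with t
      have ht : Tendsto (fun n : ℕ => t / ((n:ℝ) + 1)) atTop (𝓝 0) := by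
        apply Tendsto.div_atTop tendsto_const_nhds
        exact tendsto_atTop_add_const_right _ _ tendsto_natCast_atTop_atTop
      exact (tendsto_const_nhds.mul (((hf.tendsto 0).comp ht).pow 2))
  -- lower bounds tend to 0
  have hlow : Tendsto (fun n : ℕ => -(C / ((n:ℝ) + 1)^3)) atTop (𝓝 0) := by
    rw [show (0:ℝ) = -0 by ring]
    apply Tendsto.neg
    apply Tendsto.div_atTop tendsto_const_nhds
    exact (tendsto_pow_atTop (three_ne_zero)).comp (tendsto_atTop_add_const_right _ _ tendsto_natCast_atTop_atTop)
  have hge : 0 ≤ ∫ t : ℝ, ρ t * (f 0)^2 := by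
    have := le_of_tendsto_of_tendsto' hlow hlim (fun n => hqei _ (hnpos n))
    linarith
  rw [integral_mul_const] at hge
  have hsq : 0 < (f 0)^2 := by positivity
  exact nonneg_of_mul_nonneg_right (by linarith [hge, mul_comm (∫ (a : ℝ), ρ a) (f 0 ^ 2)] : 0 ≤ f 0 ^ 2 * ∫ t : ℝ, ρ t) hsq
end

section
/- Let H be a complex Hilbert space, Ω ∈ H, and let A : H → H be a positive continuous linear operator (i.e. A is self-adjoint and ⟨x, Ax⟩ ≥ 0 for all x ∈ H). Let S be a set of continuous linear operators on H such that A commutes with every B ∈ S, and such that the set {BΩ : B ∈ S} is dense in H. If ⟨Ω, AΩ⟩ = 0, then A = 0. -/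
open scoped InnerProductSpace

/-- Epstein–Glaser–Jaffe: Let `A` be a positive continuous linear operator
on a complex Hilbert space `H` (self-adjoint with `⟨x, Ax⟩ ≥ 0`), commuting with every
member of a set `S` of continuous operators such that `{BΩ : B ∈ S}` is dense in `H`.
If `⟨Ω, AΩ⟩ = 0` then `A = 0`. -/
theorem epstein_glaser_jaffe
    (H : Type*) [NormedAddCommGroup H] [InnerProductSpace ℂ H] [CompleteSpace H]
    (Ω : H) (A : H →L[ℂ] H)
    (hsa : IsSelfAdjoint A)
    (hpos : ∀ x : H, 0 ≤ (⟪x, A x⟫_ℂ).re)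
    (S : Set (H →L[ℂ] H))
    (hcomm : ∀ B ∈ S, A ∘L B = B ∘L A)
    (hdense : Dense ((fun B : H →L[ℂ] H => B Ω) '' S))
    (hvac : ⟪Ω, A Ω⟫_ℂ = 0) :
    A = 0 := by
  have hsymm : ∀ x y : H, ⟪x, A y⟫_ℂ = ⟪A x, y⟫_ℂ := fun x y =>
    ((ContinuousLinearMap.isSelfAdjoint_iff_isSymmetric.mp hsa) x y).symm
  -- Step 1: re ⟪x, A Ω⟫ = 0 for all x, via a discriminant argument
  have hre : ∀ x : H, (⟪x, A Ω⟫_ℂ).re = 0 := by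
    intro x
    have key : ∀ t : ℝ, 0 ≤ (⟪x, A x⟫_ℂ).re * (t * t) + (2 * (⟪x, A Ω⟫_ℂ).re) * t + 0 := by
      intro t
      have h0 : 0 ≤ (⟪Ω + (t : ℂ) • x, A (Ω + (t : ℂ) • x)⟫_ℂ).re := hpos _
      have hexp : ⟪Ω + (t : ℂ) • x, A (Ω + (t : ℂ) • x)⟫_ℂ
          = ⟪Ω, A Ω⟫_ℂ + (t : ℂ) * ⟪Ω, A x⟫_ℂ + (t : ℂ) * ⟪x, A Ω⟫_ℂ
            + (t : ℂ) * (t : ℂ) * ⟪x, A x⟫_ℂ := by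
        simp only [map_add, map_smul, inner_add_left, inner_add_right, inner_smul_left,
          inner_smul_right, Complex.conj_ofReal]
        ring
      have hconj : ⟪Ω, A x⟫_ℂ = starRingEnd ℂ ⟪x, A Ω⟫_ℂ := by
        rw [hsymm Ω x, ← inner_conj_symm]
      rw [hexp, hconj, hvac] at h0
      simp only [Complex.add_re, Complex.mul_re, Complex.ofReal_re, Complex.ofReal_im,
        Complex.conj_re, Complex.conj_im, Complex.zero_re, Complex.mul_im] at h0
      nlinarith [h0]
    have hd := discrim_le_zero key
    have hb : (2 * (⟪x, A Ω⟫_ℂ).re) ^ 2 ≤ 0 := by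
      simpa [discrim] using hd
    nlinarith [sq_nonneg (⟪x, A Ω⟫_ℂ).re, hb]
  -- Step 2: A Ω = 0
  have hAΩ : A Ω = 0 := by
    have hall : ∀ x : H, ⟪x, A Ω⟫_ℂ = 0 := by
      intro x
      have h1 := hre x
      have h2 := hre ((Complex.I) • x)
      rw [inner_smul_left] at h2
      simp only [Complex.conj_I, Complex.mul_re, Complex.neg_re, Complex.I_re, Complex.neg_im,
        Complex.I_im] at h2
      apply Complex.ext (by simpa using h1)
      simp only [Complex.zero_im]
      linarith
    have := hall (A Ω)
    rwa [inner_self_eq_zero] at this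
  -- Step 3: A vanishes on the dense set
  have heq : Set.EqOn (⇑A) (⇑(0 : H →L[ℂ] H)) ((fun B : H →L[ℂ] H => B Ω) '' S) := by
    rintro _ ⟨B, hB, rfl⟩
    have : A (B Ω) = B (A Ω) := by
      have := congrArg (fun T : H →L[ℂ] H => T Ω) (hcomm B hB)
      simpa using this
    simp [this, hAΩ]
  have : (⇑A) = (⇑(0 : H →L[ℂ] H)) :=
    Continuous.ext_on hdense A.continuous (map_continuous _) heq
  ext x
  exact congrFun this x
end

section
/- Let m, g, μ > 0 and for n > 0 define ρ(n) = n·m + 2πg²n²/μ² and P(n) = 2πg²n²/μ². Then: (i) for every n > mμ²/(4πg²) one has ρ(n) − 3P(n) < 0, i.e. the trace energy condition ρ − 3P ≥ 0 is violated; and (ii) ρ(n)/P(n) → 1 as n → ∞. -/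
open Filter

/-- Zel'dovich: For baryonic matter interacting via a Yukawa potential,
with `ρ(n) = nm + 2πg²n²/μ²` and `P(n) = 2πg²n²/μ²`, the trace energy condition
`ρ − 3P ≥ 0` fails for all `n > mμ²/(4πg²)`, and `ρ/P → 1` as `n → ∞`. -/
theorem zeldovich_tec_violation
    (m g μ : ℝ) (hm : 0 < m) (hg : 0 < g) (hμ : 0 < μ)
    (ρ P : ℝ → ℝ)
    (hρ : ∀ n : ℝ, ρ n = n * m + 2 * Real.pi * g^2 * n^2 / μ^2)
    (hP : ∀ n : ℝ, P n = 2 * Real.pi * g^2 * n^2 / μ^2) :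
    (∀ n : ℝ, m * μ^2 / (4 * Real.pi * g^2) < n → ρ n - 3 * P n < 0) ∧
      Tendsto (fun n : ℝ => ρ n / P n) atTop (nhds 1) := by
  have hπ := Real.pi_pos
  have hA : 0 < 2 * Real.pi * g^2 / μ^2 := by positivity
  constructor
  · intro n hn
    have hden : 0 < 4 * Real.pi * g^2 := by positivity
    have hn0 : 0 < n := lt_trans (by positivity) hn
    have key : m * μ^2 < n * (4 * Real.pi * g^2) :=
      (div_lt_iff₀ hden).mp hn
    rw [hρ n, hP n]
    have hμ2 : 0 < μ^2 := by positivity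
    have : n * m + 2 * Real.pi * g^2 * n^2 / μ^2 - 3 * (2 * Real.pi * g^2 * n^2 / μ^2)
        = (n * m * μ^2 - 4 * Real.pi * g^2 * n^2) / μ^2 := by
      field_simp; ring
    rw [this]
    apply div_neg_of_neg_of_pos _ hμ2
    nlinarith
  · have heq : ∀ᶠ n in atTop, m * μ^2 / (2 * Real.pi * g^2) * n⁻¹ + 1 = ρ n / P n := by
      filter_upwards [eventually_gt_atTop 0] with n hn
      rw [hρ n, hP n]
      have hP0 : 2 * Real.pi * g^2 * n^2 / μ^2 ≠ 0 := by positivity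
      field_simp
    have : Tendsto (fun n : ℝ => m * μ^2 / (2 * Real.pi * g^2) * n⁻¹ + 1) atTop (nhds 1) := by
      have := (tendsto_inv_atTop_zero.const_mul (m * μ^2 / (2 * Real.pi * g^2))).add
        (tendsto_const_nhds (x := (1:ℝ)) (f := atTop))
      simpa using this
    exact this.congr' heq
end
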